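/- arXiv:1504.04509 — 2 statements merged into one kernel-verified Lean document; each statement's English description precedes it below -/
import Mathlib

section
/- The Hardy–Littlewood maximal operator is not bounded on the Zygmund–Morrey space M_{L(1+log⁺L),1/2}(ℝ): there exists a measurable function f on ℝ with ‖f‖_{M_{L(1+log⁺L),1/2}(ℝ)} < ∞ but ‖Mf‖_{M_{L(1+log⁺L),1/2}(ℝ)} = ∞. (For instance the even function equal, for x ≥ 0, to ∑_{k≥0} χ_{[k² ln²(k+e), k² ln²(k+e)+1]}(x).) -/
open MeasureTheory ENNReal Set

noncomputable section

/-- `ℝⁿ` with the Euclidean metric. -/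
abbrev Rn (n : ℕ) : Type := EuclideanSpace ℝ (Fin n)

/-- The axis-parallel cube with center `c` and side length `h`. -/
def zCube {n : ℕ} (c : Rn n) (h : ℝ) : Set (Rn n) := {x | ∀ i, |x i - c i| ≤ h / 2}

/-- `log⁺ t = max (log t) 0`. -/
def logPlus (t : ℝ) : ℝ := max (Real.log t) 0

/-- The Hardy–Littlewood maximal operator of an `ℝ≥0∞`-valued function:
`sup_{Q ∋ x} |Q|⁻¹ ∫_Q g`, the supremum over all axis-parallel cubes containing `x`. -/
def maxE {n : ℕ} (g : Rn n → ℝ≥0∞) (x : Rn n) : ℝ≥0∞ :=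
  ⨆ (c : Rn n) (h : ℝ) (_ : 0 < h) (_ : x ∈ zCube c h),
    (ENNReal.ofReal (h ^ n))⁻¹ * ∫⁻ y in zCube c h, g y

/-- The Hardy–Littlewood maximal operator of a real function. -/
def HLM {n : ℕ} (f : Rn n → ℝ) (x : Rn n) : ℝ≥0∞ :=
  maxE (fun y => ENNReal.ofReal |f y|) x

/-- The fractional maximal operator `M_α` applied to an `ℝ≥0∞`-valued function:
`sup_{Q ∋ x} |Q|^{(α-n)/n} ∫_Q g`. -/
def fracMaxE {n : ℕ} (α : ℝ) (g : Rn n → ℝ≥0∞) (x : Rn n) : ℝ≥0∞ :=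
  ⨆ (c : Rn n) (h : ℝ) (_ : 0 < h) (_ : x ∈ zCube c h),
    ENNReal.ofReal (h ^ (α - (n : ℝ))) * ∫⁻ y in zCube c h, g y

/-- The maximal commutator `C_b(f)(x) = sup_{Q ∋ x} |Q|⁻¹ ∫_Q |b x - b y| |f y| dy`. -/
def maxComm {n : ℕ} (b f : Rn n → ℝ) (x : Rn n) : ℝ≥0∞ :=
  ⨆ (c : Rn n) (h : ℝ) (_ : 0 < h) (_ : x ∈ zCube c h),
    (ENNReal.ofReal (h ^ n))⁻¹ * ∫⁻ y in zCube c h, ENNReal.ofReal (|b x - b y| * |f y|)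

/-- The mean value `f_Q = |Q|⁻¹ ∫_Q f` of `f` over the cube with center `c`, side `h`. -/
def cubeMean {n : ℕ} (f : Rn n → ℝ) (c : Rn n) (h : ℝ) : ℝ :=
  (h ^ n)⁻¹ * ∫ y in zCube c h, f y

/-- The mean oscillation `|Q|⁻¹ ∫_Q |b - b_Q|` of `b` over a cube. -/
def oscAvg {n : ℕ} (b : Rn n → ℝ) (c : Rn n) (h : ℝ) : ℝ≥0∞ :=
  (ENNReal.ofReal (h ^ n))⁻¹ * ∫⁻ y in zCube c h, ENNReal.ofReal |b y - cubeMean b c h|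

/-- The BMO seminorm `‖b‖_* = sup_Q |Q|⁻¹ ∫_Q |b - b_Q|`. -/
def bmoNorm {n : ℕ} (b : Rn n → ℝ) : ℝ≥0∞ :=
  ⨆ (c : Rn n) (h : ℝ) (_ : 0 < h), oscAvg b c h

/-- Morrey norm `‖g‖_{M_{p,λ}} = sup_{x, r>0} r^{(λ-n)/p} (∫_{B(x,r)} g^p)^{1/p}`
for an `ℝ≥0∞`-valued function. -/
def morreyE {n : ℕ} (p lam : ℝ) (g : Rn n → ℝ≥0∞) : ℝ≥0∞ :=
  ⨆ (x : Rn n) (r : ℝ) (_ : 0 < r),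
    ENNReal.ofReal (r ^ ((lam - n) / p)) * (∫⁻ y in Metric.ball x r, g y ^ p) ^ (1 / p)

/-- Morrey norm of a real function. -/
def morrey {n : ℕ} (p lam : ℝ) (f : Rn n → ℝ) : ℝ≥0∞ :=
  morreyE p lam (fun y => ENNReal.ofReal |f y|)

/-- The Zygmund function `Φ(t) = t (1 + log⁺ t)`, extended to `ℝ≥0∞`. -/
def zygFnE (t : ℝ≥0∞) : ℝ≥0∞ := t * (1 + ENNReal.ofReal (logPlus t.toReal))

/-- The Luxemburg-type `L(1+log⁺L)`-average of `g` over a cube: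
`inf {α > 0 : |Q|⁻¹ ∫_Q Φ(g/α) ≤ 1}` (as an element of `ℝ≥0∞`, `= ∞` if no such `α`). -/
def zygAvgE {n : ℕ} (g : Rn n → ℝ≥0∞) (c : Rn n) (h : ℝ) : ℝ≥0∞ :=
  sInf {a : ℝ≥0∞ | ∃ α : ℝ, 0 < α ∧ a = ENNReal.ofReal α ∧
    (ENNReal.ofReal (h ^ n))⁻¹ * ∫⁻ y in zCube c h, zygFnE (g y / ENNReal.ofReal α) ≤ 1}

/-- The `L(1+log⁺L)`-average of a real function over a cube. -/
def zygAvg {n : ℕ} (f : Rn n → ℝ) (c : Rn n) (h : ℝ) : ℝ≥0∞ :=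
  zygAvgE (fun y => ENNReal.ofReal |f y|) c h

/-- The weak `L(1+log⁺L)`-average of `g` over a cube:
`inf {α > 0 : ∀ t > 0, |Q|⁻¹ |{x ∈ Q : g x > α t}| ≤ (1/t)(1 + log⁺(1/t))}`. -/
def weakZygAvgE {n : ℕ} (g : Rn n → ℝ≥0∞) (c : Rn n) (h : ℝ) : ℝ≥0∞ :=
  sInf {a : ℝ≥0∞ | ∃ α : ℝ, 0 < α ∧ a = ENNReal.ofReal α ∧ ∀ t : ℝ, 0 < t →
    (ENNReal.ofReal (h ^ n))⁻¹ * volume {x ∈ zCube c h | ENNReal.ofReal (α * t) < g x}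
      ≤ ENNReal.ofReal ((1 / t) * (1 + logPlus (1 / t)))}

/-- The Zygmund–Morrey norm `sup_Q |Q|^{λ/n} ‖g‖_{L(1+log⁺L),Q}` of an `ℝ≥0∞`-valued function. -/
def zygMorreyE {n : ℕ} (lam : ℝ) (g : Rn n → ℝ≥0∞) : ℝ≥0∞ :=
  ⨆ (c : Rn n) (h : ℝ) (_ : 0 < h), ENNReal.ofReal (h ^ lam) * zygAvgE g c h

/-- The Zygmund–Morrey norm of a real function. -/
def zygMorrey {n : ℕ} (lam : ℝ) (f : Rn n → ℝ) : ℝ≥0∞ :=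
  zygMorreyE lam (fun y => ENNReal.ofReal |f y|)

/-- The weak Zygmund–Morrey norm `sup_Q |Q|^{λ/n} ‖g‖_{WL(1+log⁺L),Q}`. -/
def weakZygMorreyE {n : ℕ} (lam : ℝ) (g : Rn n → ℝ≥0∞) : ℝ≥0∞ :=
  ⨆ (c : Rn n) (h : ℝ) (_ : 0 < h), ENNReal.ofReal (h ^ lam) * weakZygAvgE g c h

/-- The commutator `[M,b]f(x) = M(bf)(x) - b(x) Mf(x)`. -/
def commMb {n : ℕ} (b f : Rn n → ℝ) (x : Rn n) : ℝ :=
  (HLM (fun y => b y * f y) x).toReal - b x * (HLM f x).toReal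

/-- `f` is radially decreasing: `f x = φ ‖x‖` with `φ` nonnegative and
nonincreasing on `(0,∞)`, measurable. -/
def RadDec {n : ℕ} (f : Rn n → ℝ) : Prop :=
  ∃ φ : ℝ → ℝ, Measurable φ ∧ (∀ r : ℝ, 0 < r → 0 ≤ φ r) ∧
    AntitoneOn φ (Set.Ioi 0) ∧ ∀ x, f x = φ ‖x‖

/-- `∫_Q |f| (1 + log⁺(|f| / |f|_Q))`. -/
def zygInt {n : ℕ} (f : Rn n → ℝ) (c : Rn n) (h : ℝ) : ℝ≥0∞ :=
  ∫⁻ y in zCube c h,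
    ENNReal.ofReal (|f y| * (1 + logPlus (|f y| / cubeMean (fun z => |f z|) c h)))

/-- `∫_0^t φ(ρ) ρ^{n-1} dρ`. -/
def radInt1 (n : ℕ) (φ : ℝ → ℝ) (t : ℝ) : ℝ≥0∞ :=
  ∫⁻ ρ in Set.Ioc (0 : ℝ) t, ENNReal.ofReal (φ ρ * ρ ^ (n - 1))

/-- `∫_0^x (1/t) ∫_0^t φ(ρ) ρ^{n-1} dρ dt`. -/
def radInt2 (n : ℕ) (φ : ℝ → ℝ) (x : ℝ) : ℝ≥0∞ :=
  ∫⁻ t in Set.Ioc (0 : ℝ) x, (ENNReal.ofReal t)⁻¹ * radInt1 n φ t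

/-- `∫_0^x (1/y) ∫_0^y (1/t) ∫_0^t φ(ρ) ρ^{n-1} dρ dt dy`. -/
def radInt3 (n : ℕ) (φ : ℝ → ℝ) (x : ℝ) : ℝ≥0∞ :=
  ∫⁻ y in Set.Ioc (0 : ℝ) x, (ENNReal.ofReal y)⁻¹ * radInt2 n φ y

/-- `sup_{x>0} x^{λ-n} ∫_0^x (1/t) ∫_0^t φ(ρ) ρ^{n-1} dρ dt`. -/
def radSup2 (n : ℕ) (lam : ℝ) (φ : ℝ → ℝ) : ℝ≥0∞ :=
  ⨆ (x : ℝ) (_ : 0 < x), ENNReal.ofReal (x ^ (lam - (n : ℝ))) * radInt2 n φ x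

/-- `sup_{x>0} x^{λ-n} ∫_0^x (1/y) ∫_0^y (1/t) ∫_0^t φ(ρ) ρ^{n-1} dρ dt dy`. -/
def radSup3 (n : ℕ) (lam : ℝ) (φ : ℝ → ℝ) : ℝ≥0∞ :=
  ⨆ (x : ℝ) (_ : 0 < x), ENNReal.ofReal (x ^ (lam - (n : ℝ))) * radInt3 n φ x


section Aux15
set_option maxHeartbeats 1000000
namespace S15
/-- `L k = 1 + log k` -/
def L (k : ℕ) : ℝ := 1 + Real.log k
def c (k : ℕ) : ℝ := k * L k
def p (k : ℕ) : ℝ := (c k)^2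

lemma log_nat_nonneg (k : ℕ) : 0 ≤ Real.log k := by
  cases k with
  | zero => simp
  | succ n => exact Real.log_nonneg (by exact_mod_cast Nat.one_le_iff_ne_zero.2 (Nat.succ_ne_zero n))

lemma one_le_L (k : ℕ) : 1 ≤ L k := by
  have := log_nat_nonneg k; unfold L; linarith

lemma L_pos (k : ℕ) : 0 < L k := lt_of_lt_of_le one_pos (one_le_L k)

lemma L_mono {k m : ℕ} (h : k ≤ m) : L k ≤ L m := by
  unfold L
  rcases Nat.eq_zero_or_pos k with hk | hk
  · subst hk; simp [Real.log_zero]; exact log_nat_nonneg m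
  · have : (k:ℝ) ≤ m := by exact_mod_cast h
    have hk' : (0:ℝ) < k := by exact_mod_cast hk
    linarith [Real.log_le_log hk' this]

lemma k_le_c (k : ℕ) : (k:ℝ) ≤ c k := by
  unfold c
  nlinarith [one_le_L k, (Nat.cast_nonneg k : (0:ℝ) ≤ k)]

lemma c_nonneg (k : ℕ) : 0 ≤ c k := le_trans (Nat.cast_nonneg k) (k_le_c k)

lemma c_pos {k : ℕ} (h : 1 ≤ k) : 0 < c k := by
  have : (1:ℝ) ≤ k := by exact_mod_cast h
  linarith [k_le_c k]

lemma c_mono {k m : ℕ} (h : k ≤ m) : c k ≤ c m := by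
  unfold c
  have h' : (k:ℝ) ≤ m := by exact_mod_cast h
  have := L_mono h
  nlinarith [L_pos k, (Nat.cast_nonneg k : (0:ℝ) ≤ k)]

lemma c_succ (k : ℕ) : c k + L k ≤ c (k+1) := by
  unfold c
  have : L k ≤ L (k+1) := L_mono (Nat.le_succ k)
  push_cast
  nlinarith [(Nat.cast_nonneg k : (0:ℝ) ≤ k), L_pos k]

lemma c_succ' (k : ℕ) : c k + 1 ≤ c (k+1) := le_trans (by linarith [one_le_L k]) (c_succ k)

lemma p_nonneg (k : ℕ) : 0 ≤ p k := sq_nonneg _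

lemma p_mono {k m : ℕ} (h : k ≤ m) : p k ≤ p m := by
  unfold p
  nlinarith [c_mono h, c_nonneg k, c_nonneg m]

lemma sqrt_p (k : ℕ) : Real.sqrt (p k) = c k := by
  unfold p; exact Real.sqrt_sq (c_nonneg k)

lemma one_le_p {k : ℕ} (h : 1 ≤ k) : 1 ≤ p k := by
  have h1 : (1:ℝ) ≤ k := by exact_mod_cast h
  have := k_le_c k
  unfold p; nlinarith

lemma k_le_p {k : ℕ} (h : 1 ≤ k) : (k:ℝ) ≤ p k := by
  have h1 : (1:ℝ) ≤ k := by exact_mod_cast h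
  have := k_le_c k
  unfold p; nlinarith

lemma p_eq (k : ℕ) : p k = c k * c k := by unfold p; ring

lemma p_succ_gap (k : ℕ) : p k + c (k+1) + c k ≤ p (k+1) := by
  have h1 := c_succ' k
  have h2 := c_nonneg k
  unfold p; nlinarith

/-- telescoped lower bound on gaps -/
lemma p_tele {k0 k1 : ℕ} (h : k0 ≤ k1) : p k0 + (k1 - k0 : ℕ) * (L k0 * c k0) ≤ p k1 := by
  induction k1, h using Nat.le_induction with
  | base => simp
  | succ n hn ih =>
    have gap : p n + L n * c n ≤ p (n+1) := by
      have h1 := c_succ n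
      have h2 := c_nonneg n
      have h3 := L_pos n
      unfold p; nlinarith
    have hL : L k0 * c k0 ≤ L n * c n := by
      have := L_mono hn; have := c_mono hn
      nlinarith [L_pos k0, c_nonneg k0]
    have hcast : ((n + 1 - k0 : ℕ) : ℝ) = ((n - k0 : ℕ) : ℝ) + 1 := by
      rw [Nat.sub_add_comm hn]; push_cast; ring
    rw [hcast]
    nlinarith

lemma log_succ_le (k : ℕ) (h : 1 ≤ k) : Real.log (k+1) ≤ L k := by
  have h1 : (1:ℝ) ≤ k := by exact_mod_cast h
  have he : (k:ℝ) + 1 ≤ Real.exp 1 * k := by nlinarith [Real.add_one_le_exp (1:ℝ)]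
  calc Real.log (k+1) ≤ Real.log (Real.exp 1 * k) := by
        apply Real.log_le_log (by linarith) he
    _ = 1 + Real.log k := by
        rw [Real.log_mul (Real.exp_ne_zero 1) (by positivity), Real.log_exp]
    _ = L k := rfl

lemma log_L_succ_le (k : ℕ) (h : 1 ≤ k) : Real.log (L (k+1)) ≤ L k := by
  have := Real.log_le_sub_one_of_pos (L_pos (k+1))
  have : Real.log (L (k+1)) ≤ L (k+1) - 1 := this
  have h2 : L (k+1) - 1 = Real.log (k+1) := by unfold L; push_cast; ring
  rw [h2] at this
  exact le_trans this (log_succ_le k h)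

lemma log_c_succ_le (k : ℕ) (h : 1 ≤ k) : Real.log (c (k+1)) ≤ 2 * L k := by
  unfold c
  have h1 : ((k+1:ℕ):ℝ) ≠ 0 := by positivity
  rw [Real.log_mul h1 (ne_of_gt (L_pos (k+1)))]
  have h2 : Real.log ((k+1:ℕ):ℝ) = Real.log ((k:ℝ)+1) := by push_cast; ring_nf
  rw [h2]
  linarith [log_succ_le k h, log_L_succ_le k h]

lemma log_p_succ_le (k : ℕ) (h : 1 ≤ k) : Real.log (p (k+1)) ≤ 4 * L k := by
  unfold p
  have h1 : c (k+1) ≠ 0 := ne_of_gt (c_pos (by omega))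
  rw [sq, Real.log_mul h1 h1]
  linarith [log_c_succ_le k h]

lemma logPlus_nonneg (t : ℝ) : 0 ≤ logPlus t := le_max_right _ _

lemma logPlus_mono {a b : ℝ} (ha : 0 ≤ a) (hab : a ≤ b) : logPlus a ≤ logPlus b := by
  unfold logPlus
  rcases eq_or_lt_of_le ha with h | h
  · simp [← h, Real.log_zero]
  · exact max_le_max (Real.log_le_log h hab) le_rfl

lemma logPlus_le_two_sqrt (t : ℝ) (ht : 0 ≤ t) : logPlus t ≤ 2 * Real.sqrt t := by
  unfold logPlus
  rcases le_or_gt t 1 with h | h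
  · rw [max_eq_right (Real.log_nonpos ht h)]; positivity
  · rw [max_eq_left (le_of_lt (Real.log_pos h))]
    have hs : 0 < Real.sqrt t := Real.sqrt_pos.2 (by linarith)
    have h2 := Real.log_le_sub_one_of_pos hs
    have hsq : Real.log t = 2 * Real.log (Real.sqrt t) := by
      conv_lhs => rw [← Real.mul_self_sqrt ht]
      rw [Real.log_mul (ne_of_gt hs) (ne_of_gt hs)]; ring
    rw [hsq]; linarith

end S15

namespace Part2
open S15

def E : Set ℝ := ⋃ k : ℕ, Icc (p (k+1)) (p (k+1) + 1)

lemma E_meas : MeasurableSet E := MeasurableSet.iUnion (fun k => measurableSet_Icc)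

lemma bump_subset_E {k : ℕ} (hk : 1 ≤ k) : Icc (p k) (p k + 1) ⊆ E := by
  intro x hx
  exact mem_iUnion.2 ⟨k - 1, by rwa [Nat.sub_add_cancel hk]⟩

lemma E_subset : E ⊆ {x : ℝ | 1 ≤ x} := by
  intro x hx
  rcases mem_iUnion.1 hx with ⟨k, hk⟩
  have := one_le_p (k := k+1) (by omega)
  exact le_trans this hk.1

/-- the finset of bump-indices possibly intersecting `[A,B]`. -/
def T (A B : ℝ) : Finset ℕ := (Finset.Icc 1 ⌊B⌋₊).filter (fun k => p k ≤ B ∧ A ≤ p k + 1)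

lemma mem_T_iff {A B : ℝ} {k : ℕ} :
    k ∈ T A B ↔ (1 ≤ k ∧ k ≤ ⌊B⌋₊) ∧ p k ≤ B ∧ A ≤ p k + 1 := by
  simp [T, Finset.mem_filter, Finset.mem_Icc, and_assoc]

lemma E_inter_subset (A B : ℝ) :
    E ∩ Icc A B ⊆ ⋃ k ∈ T A B, Icc (p k) (p k + 1) := by
  rintro x ⟨hE, hA, hB⟩
  rcases mem_iUnion.1 hE with ⟨j, hj⟩
  refine mem_iUnion.2 ⟨j+1, mem_iUnion.2 ⟨?_, hj⟩⟩
  have h1 : p (j+1) ≤ B := le_trans hj.1 hB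
  have h2 : A ≤ p (j+1) + 1 := le_trans hA hj.2
  refine Finset.mem_filter.2 ⟨Finset.mem_Icc.2 ⟨by omega, ?_⟩, h1, h2⟩
  exact Nat.le_floor (le_trans (k_le_p (by omega)) h1)

lemma measure_E_inter_le (A B : ℝ) :
    volume (E ∩ Icc A B) ≤ ((T A B).card : ℝ≥0∞) := by
  refine le_trans (measure_mono (E_inter_subset A B)) ?_
  refine le_trans (measure_biUnion_finset_le _ _) ?_
  have : ∀ k ∈ T A B, volume (Icc (p k) (p k + 1)) = 1 := by
    intro k _
    rw [Real.volume_Icc]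
    norm_num
  rw [Finset.sum_congr rfl this]
  simp

end Part2

namespace Part3
open S15 Part2

lemma UB (A B : ℝ) (hAB : A ≤ B) :
    (volume (E ∩ Icc A B)).toReal * (1 + logPlus (Real.sqrt (B-A) / 100)) ≤
      100 * Real.sqrt (B-A) := by
  set h : ℝ := B - A with hh
  have h0 : 0 ≤ h := by linarith
  set ν : ℝ := (volume (E ∩ Icc A B)).toReal with hν
  have hν0 : 0 ≤ ν := ENNReal.toReal_nonneg
  have hs0 : 0 ≤ Real.sqrt h := Real.sqrt_nonneg h
  have hss : Real.sqrt h * Real.sqrt h = h := Real.mul_self_sqrt h0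
  have hνh : ν ≤ h := by
    have hle : volume (E ∩ Icc A B) ≤ ENNReal.ofReal h := by
      refine le_trans (measure_mono (inter_subset_right)) ?_
      rw [Real.volume_Icc]
    have := ENNReal.toReal_mono (by simp) hle
    rwa [ENNReal.toReal_ofReal h0] at this
  rcases le_or_gt (Real.sqrt h) 100 with hcase | hcase
  · -- small h
    have hlp : logPlus (Real.sqrt h / 100) = 0 := by
      unfold logPlus
      rw [max_eq_right]
      exact Real.log_nonpos (by positivity) (by linarith)
    rw [hlp]
    nlinarith
  · -- large h
    have h1 : 1 < h := by nlinarith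
    have hlog100 : (1:ℝ) ≤ Real.log 100 := by
      rw [Real.le_log_iff_exp_le (by norm_num)]
      have := Real.exp_one_lt_d9
      linarith
    have hF : 1 + logPlus (Real.sqrt h / 100) ≤ Real.log h / 2 := by
      unfold logPlus
      rw [max_eq_left (le_of_lt (Real.log_pos (by rw [lt_div_iff₀ (by norm_num)]; linarith)))]
      rw [Real.log_div (by positivity) (by norm_num), Real.log_sqrt h0]
      linarith
    have hlogh0 : 0 ≤ Real.log h := le_of_lt (Real.log_pos h1)
    have key : ν * Real.log h ≤ 200 * Real.sqrt h := by
      rcases le_or_gt ν 1 with hν1 | hν1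
      · have hlh : Real.log h ≤ 2 * Real.sqrt h := by
          have := logPlus_le_two_sqrt h h0
          unfold logPlus at this
          rwa [max_eq_left (le_of_lt (Real.log_pos h1))] at this
        have := mul_le_of_le_one_left hlogh0 hν1
        linarith
      · -- main counting case
        set N : ℕ := (T A B).card with hN
        have hνN : ν ≤ N := by
          have := ENNReal.toReal_mono (by simp) (measure_E_inter_le A B)
          simpa using this
        have hN2 : 2 ≤ N := by
          by_contra hc
          push_neg at hc
          have : (N:ℝ) ≤ 1 := by
            have : N ≤ 1 := by omega
            exact_mod_cast this
          linarith
        have hTne : (T A B).Nonempty := Finset.card_pos.1 (by omega)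
        set k0 := (T A B).min' hTne with hk0def
        set k1 := (T A B).max' hTne with hk1def
        have hk01 : k0 < k1 := Finset.min'_lt_max'_of_card _ (by omega)
        have hk0mem := mem_T_iff.1 ((T A B).min'_mem hTne)
        have hk1mem := mem_T_iff.1 ((T A B).max'_mem hTne)
        obtain ⟨⟨h1k0, _⟩, hpk0B, hApk0⟩ := hk0mem
        obtain ⟨⟨h1k1, _⟩, hpk1B, hApk1⟩ := hk1mem
        have hp' : B < p (k1+1) := by
          by_contra hc
          push_neg at hc
          have hmem : k1 + 1 ∈ T A B := by
            refine mem_T_iff.2 ⟨⟨by omega, ?_⟩, hc, ?_⟩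
            · exact Nat.le_floor (le_trans (k_le_p (by omega)) hc)
            · exact le_trans hApk0 (by linarith [p_mono (show k0 ≤ k1+1 by omega)])
          have := (T A B).le_max' _ hmem
          omega
        have hNk : N ≤ k1 + 1 - k0 := by
          have hsub : T A B ⊆ Finset.Icc k0 k1 := by
            intro k hk
            exact Finset.mem_Icc.2 ⟨(T A B).min'_le k hk, (T A B).le_max' k hk⟩
          calc N ≤ (Finset.Icc k0 k1).card := Finset.card_le_card hsub
            _ = k1 + 1 - k0 := Nat.card_Icc k0 k1
        have hNk1 : (N:ℝ) ≤ k1 := by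
          have : N ≤ k1 := by omega
          exact_mod_cast this
        have hNkk : (N:ℝ) ≤ 2 * ((k1 - k0 : ℕ) : ℝ) := by
          have : N ≤ 2 * (k1 - k0) := by omega
          exact_mod_cast this
        -- window
        set A' : ℝ := max A 1 with hA'
        set w : ℝ := B - A' with hw
        have h1pk0 : 1 ≤ p k0 := one_le_p h1k0
        have hw0 : 0 ≤ w := by
          have : A' ≤ B := max_le hAB (le_trans h1pk0 hpk0B)
          simp only [hw]; linarith
        have hwh : w ≤ h := by
          have : A ≤ A' := le_max_left A 1
          simp only [hw, hh]; linarith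
        have hpk0A' : A' - 1 ≤ p k0 := by
          have : A' ≤ p k0 + 1 := max_le (by linarith) (by linarith)
          linarith
        have hgap : p k1 - p k0 ≤ w + 1 := by
          simp only [hw]; linarith
        have h1k0R : (1:ℝ) ≤ (k0:ℝ) := by exact_mod_cast h1k0
        have hck01 : (1:ℝ) ≤ c k0 := le_trans h1k0R (k_le_c k0)
        have hw1 : 1 ≤ w := by
          have hg := p_succ_gap k0
          have h2 : p (k0+1) ≤ p k1 := p_mono (by omega)
          have h4 : (1:ℝ) ≤ c (k0+1) := le_trans hck01 (c_mono (Nat.le_succ k0))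
          linarith
        have hsw0 : 0 ≤ Real.sqrt w := Real.sqrt_nonneg w
        have hsws : Real.sqrt w * Real.sqrt w = w := Real.mul_self_sqrt hw0
        -- main claim
        have NL : (N:ℝ) * L k1 ≤ 8 * Real.sqrt w := by
          rcases le_or_gt (c k1) (2 * Real.sqrt w) with hck | hck
          · calc (N:ℝ) * L k1 ≤ (k1:ℝ) * L k1 :=
                  mul_le_mul_of_nonneg_right hNk1 (le_of_lt (L_pos k1))
              _ = c k1 := rfl
              _ ≤ 2 * Real.sqrt w := hck
              _ ≤ 8 * Real.sqrt w := by linarith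
          · have hpk1w : 4 * w < p k1 := by
              have hcc : (2*Real.sqrt w)*(2*Real.sqrt w) < c k1 * c k1 :=
                mul_self_lt_mul_self (by positivity) hck
              have h4w : (2*Real.sqrt w)*(2*Real.sqrt w) = 4*w := by
                rw [show (2*Real.sqrt w)*(2*Real.sqrt w)
                  = 4*(Real.sqrt w * Real.sqrt w) by ring, hsws]
              rw [← p_eq k1] at hcc
              linarith
            have hpk0w : 2 * w ≤ p k0 := by linarith
            have hck0 : Real.sqrt (2*w) ≤ c k0 := by
              rw [← sqrt_p k0]
              exact Real.sqrt_le_sqrt hpk0w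
            have hs2w : Real.sqrt (2*w) * Real.sqrt (2*w) = 2*w := Real.mul_self_sqrt (by linarith)
            have hs2wpos : 0 < Real.sqrt (2*w) := Real.sqrt_pos.2 (by linarith)
            have htele := p_tele (show k0 ≤ k1 by omega)
            have hkk0 : (0:ℝ) ≤ ((k1 - k0:ℕ):ℝ) := Nat.cast_nonneg _
            have hxL0 : (0:ℝ) ≤ ((k1 - k0:ℕ):ℝ) * L k0 :=
              mul_nonneg hkk0 (le_of_lt (L_pos k0))
            have hkkL : ((k1 - k0:ℕ):ℝ) * L k0 ≤ Real.sqrt (2*w) := by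
              have h2 : ((k1 - k0:ℕ):ℝ) * L k0 * c k0 ≤ 2*w := by
                rw [mul_assoc]; linarith [htele]
              have h3 : ((k1 - k0:ℕ):ℝ) * L k0 * Real.sqrt (2*w)
                  ≤ ((k1 - k0:ℕ):ℝ) * L k0 * c k0 :=
                mul_le_mul_of_nonneg_left hck0 hxL0
              have h5 : ((k1-k0:ℕ):ℝ) * L k0 * Real.sqrt (2*w)
                  ≤ Real.sqrt (2*w) * Real.sqrt (2*w) := by
                rw [hs2w]; exact le_trans h3 h2
              exact le_of_mul_le_mul_right h5 hs2wpos
            -- L k1 ≤ 2 L k0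
            have hck1k0 : c k1 ≤ 2 * c k0 := by
              have hpp : p k1 ≤ 2 * p k0 := by linarith
              have hstep := Real.sqrt_le_sqrt hpp
              rw [sqrt_p] at hstep
              have h4p : 2 * p k0 ≤ (2*c k0)*(2*c k0) := by
                rw [show (2*c k0)*(2*c k0) = 4 * (c k0 * c k0) by ring, ← p_eq k0]
                linarith [p_nonneg k0]
              have h2 : Real.sqrt (2 * p k0) ≤ 2 * c k0 :=
                le_trans (Real.sqrt_le_sqrt h4p)
                  (le_of_eq (Real.sqrt_mul_self (by linarith)))
              linarith
            have hk12k0 : (k1:ℝ) ≤ 2 * k0 := by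
              have hstep : (k1:ℝ) * L k0 ≤ ((2:ℝ) * k0) * L k0 := by
                calc (k1:ℝ) * L k0 ≤ (k1:ℝ) * L k1 :=
                      mul_le_mul_of_nonneg_left (L_mono (le_of_lt hk01)) (Nat.cast_nonneg k1)
                  _ = c k1 := rfl
                  _ ≤ 2 * c k0 := hck1k0
                  _ = ((2:ℝ) * k0) * L k0 := by unfold c; ring
              exact le_of_mul_le_mul_right hstep (L_pos k0)
            have hLL : L k1 ≤ 2 * L k0 := by
              have hk0pos : (0:ℝ) < k0 := by linarith
              have hk1pos : (0:ℝ) < k1 := by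
                have : (k0:ℝ) < k1 := by exact_mod_cast hk01
                linarith
              have hlog : Real.log k1 ≤ Real.log 2 + Real.log k0 := by
                rw [← Real.log_mul (by norm_num) (ne_of_gt hk0pos)]
                exact Real.log_le_log hk1pos hk12k0
              have hlog2 : Real.log 2 ≤ 1 := by
                have := Real.log_le_sub_one_of_pos (show (0:ℝ) < 2 by norm_num)
                linarith
              have := log_nat_nonneg k0
              unfold L; linarith
            have hstep1 : (N:ℝ) * L k1 ≤ (2 * ((k1-k0:ℕ):ℝ)) * (2 * L k0) :=
              mul_le_mul hNkk hLL (le_of_lt (L_pos k1)) (by linarith)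
            have hstep2 : (2 * ((k1-k0:ℕ):ℝ)) * (2 * L k0)
                = 4 * (((k1-k0:ℕ):ℝ) * L k0) := by ring
            have h2w4w : Real.sqrt (2*w) ≤ 2 * Real.sqrt w := by
              have h4w : (2*Real.sqrt w)*(2*Real.sqrt w) = 4*w := by
                rw [show (2*Real.sqrt w)*(2*Real.sqrt w)
                  = 4*(Real.sqrt w * Real.sqrt w) by ring, hsws]
              calc Real.sqrt (2*w) ≤ Real.sqrt ((2*Real.sqrt w)*(2*Real.sqrt w)) := by
                    apply Real.sqrt_le_sqrt; rw [h4w]; linarith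
                _ = 2 * Real.sqrt w := Real.sqrt_mul_self (by linarith)
            calc (N:ℝ) * L k1 ≤ 4 * (((k1-k0:ℕ):ℝ) * L k0) := by
                  rw [← hstep2]; exact hstep1
              _ ≤ 4 * Real.sqrt (2*w) := by linarith
              _ ≤ 8 * Real.sqrt w := by linarith
        -- part 2
        set p' : ℝ := p (k1+1) with hp'def
        have hp'1 : 1 ≤ p' := one_le_p (by omega)
        have hsp' : Real.sqrt p' = c (k1+1) := sqrt_p (k1+1)
        have hNp' : (N:ℝ) ≤ Real.sqrt p' := by
          rw [hsp']
          calc (N:ℝ) ≤ k1 := hNk1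
            _ ≤ c k1 := k_le_c k1
            _ ≤ c (k1+1) := c_mono (Nat.le_succ k1)
        have hsp'pos : 0 < Real.sqrt p' := Real.sqrt_pos.2 (by linarith)
        have hN0 : (0:ℝ) ≤ N := Nat.cast_nonneg N
        have part2 : (N:ℝ) * logPlus (h / p') ≤ 2 * Real.sqrt h := by
          have hlp : logPlus (h/p') ≤ 2 * (Real.sqrt h / Real.sqrt p') := by
            have := logPlus_le_two_sqrt (h/p') (by positivity)
            rwa [Real.sqrt_div h0] at this
          calc (N:ℝ) * logPlus (h/p') ≤ (N:ℝ) * (2 * (Real.sqrt h / Real.sqrt p')) :=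
                mul_le_mul_of_nonneg_left hlp hN0
            _ ≤ Real.sqrt p' * (2 * (Real.sqrt h / Real.sqrt p')) :=
                mul_le_mul_of_nonneg_right hNp' (by positivity)
            _ = 2 * Real.sqrt h := by field_simp
        have hdec : Real.log h ≤ Real.log p' + logPlus (h / p') := by
          rcases le_or_gt h p' with hc | hc
          · have : Real.log h ≤ Real.log p' := Real.log_le_log (by linarith) hc
            linarith [logPlus_nonneg (h/p')]
          · have hlogdiv : Real.log (h/p') = Real.log h - Real.log p' :=
              Real.log_div (by linarith) (by linarith)
            have : Real.log (h/p') ≤ logPlus (h/p') := le_max_left _ _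
            linarith
        have hlogp' : Real.log p' ≤ 4 * L k1 := log_p_succ_le k1 h1k1
        have hswh : Real.sqrt w ≤ Real.sqrt h := Real.sqrt_le_sqrt hwh
        calc ν * Real.log h ≤ (N:ℝ) * Real.log h :=
              mul_le_mul_of_nonneg_right hνN hlogh0
          _ ≤ (N:ℝ) * (Real.log p' + logPlus (h/p')) :=
              mul_le_mul_of_nonneg_left hdec hN0
          _ = (N:ℝ) * Real.log p' + (N:ℝ) * logPlus (h/p') := by ring
          _ ≤ (N:ℝ) * (4 * L k1) + 2 * Real.sqrt h := by
              have := mul_le_mul_of_nonneg_left hlogp' hN0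
              linarith
          _ = 4 * ((N:ℝ) * L k1) + 2 * Real.sqrt h := by ring
          _ ≤ 4 * (8 * Real.sqrt w) + 2 * Real.sqrt h := by linarith
          _ ≤ 200 * Real.sqrt h := by linarith
    -- conclude
    have hstep : ν * (1 + logPlus (Real.sqrt h / 100)) ≤ ν * (Real.log h / 2) :=
      mul_le_mul_of_nonneg_left hF hν0
    have heq : ν * (Real.log h / 2) = (ν * Real.log h) / 2 := by ring
    rw [heq] at hstep
    linarith

end Part3


namespace Part4
open S15 Part2 Part3

def φ : Rn 1 ≃ᵐ ℝ :=
  (MeasurableEquiv.toLp 2 (Fin 1 → ℝ)).symm.trans (MeasurableEquiv.funUnique (Fin 1) ℝ)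

lemma φ_mp : MeasurePreserving φ volume volume :=
  (EuclideanSpace.volume_preserving_symm_measurableEquiv_toLp (Fin 1)).trans
    (volume_preserving_funUnique (Fin 1) ℝ)

lemma zCube_eq (cc : Rn 1) (h : ℝ) :
    zCube cc h = φ ⁻¹' (Icc (cc 0 - h/2) (cc 0 + h/2)) := by
  ext x
  have hx : φ x = x 0 := rfl
  simp only [zCube, mem_setOf_eq, mem_preimage, mem_Icc, Fin.forall_fin_one, hx]
  rw [abs_sub_le_iff]
  constructor <;> intro ⟨a,b⟩ <;> constructor <;> linarith

lemma lintegral_zCube (cc : Rn 1) (h : ℝ) (G : Rn 1 → ℝ≥0∞) :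
    ∫⁻ y in zCube cc h, G y = ∫⁻ t in Icc (cc 0 - h/2) (cc 0 + h/2), G (φ.symm t) := by
  rw [zCube_eq]
  rw [← MeasurePreserving.setLIntegral_comp_preimage_emb φ_mp φ.measurableEmbedding]
  congr 1
  ext y
  congr 1
  exact (φ.symm_apply_apply y).symm

def f : Rn 1 → ℝ := fun x => indicator E (fun _ => 1) (x 0)

lemma f_symm (t : ℝ) : f (φ.symm t) = indicator E (fun _ => 1) t := rfl

lemma f_meas : Measurable f := by
  have h1 : Measurable (fun x : Rn 1 => x 0) := by
    have : Measurable (φ : Rn 1 → ℝ) := φ.measurable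
    exact this
  exact (measurable_const.indicator E_meas).comp h1

lemma zygFnE_zero : zygFnE 0 = 0 := by
  unfold zygFnE
  simp

lemma zygFnE_ofReal (u : ℝ) (hu : 0 ≤ u) :
    zygFnE (ENNReal.ofReal u) = ENNReal.ofReal (u * (1 + logPlus u)) := by
  unfold zygFnE
  rw [ENNReal.toReal_ofReal hu]
  rw [show (1:ℝ≥0∞) + ENNReal.ofReal (logPlus u) = ENNReal.ofReal (1 + logPlus u) by
    rw [ENNReal.ofReal_add (by norm_num) (logPlus_nonneg u), ENNReal.ofReal_one]]
  rw [← ENNReal.ofReal_mul hu]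

lemma zygFnE_mono {a b : ℝ≥0∞} (hab : a ≤ b) : zygFnE a ≤ zygFnE b := by
  unfold zygFnE
  rcases eq_or_ne b ⊤ with hb | hb
  · subst hb
    rcases eq_or_ne a ⊤ with ha | ha
    · subst ha; exact le_rfl
    · apply le_top.trans_eq
      symm
      rw [ENNReal.top_mul]
      intro hc
      have : (1:ℝ≥0∞) ≤ 1 + ENNReal.ofReal (logPlus (⊤:ℝ≥0∞).toReal) := le_self_add
      rw [hc] at this
      exact absurd this (by norm_num)
  · have ha : a ≠ ⊤ := ne_top_of_le_ne_top hb hab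
    apply mul_le_mul' hab
    apply add_le_add_right
    apply ENNReal.ofReal_le_ofReal
    exact logPlus_mono ENNReal.toReal_nonneg (ENNReal.toReal_mono hb hab)

lemma zygAvg_f_le (cc : Rn 1) (h : ℝ) (hh : 0 < h) :
    zygAvgE (fun y => ENNReal.ofReal |f y|) cc h ≤ ENNReal.ofReal (100 / Real.sqrt h) := by
  have hsh : 0 < Real.sqrt h := Real.sqrt_pos.2 hh
  set α : ℝ := 100 / Real.sqrt h with hα
  have hαpos : 0 < α := by positivity
  apply sInf_le
  refine ⟨α, hαpos, rfl, ?_⟩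
  set A : ℝ := cc 0 - h/2 with hA
  set B : ℝ := cc 0 + h/2 with hB
  have hBA : B - A = h := by simp only [hA, hB]; ring
  set C : ℝ≥0∞ := ENNReal.ofReal ((Real.sqrt h/100) * (1 + logPlus (Real.sqrt h/100))) with hC
  have hint : (∫⁻ y in zCube cc h,
      zygFnE (ENNReal.ofReal |f y| / ENNReal.ofReal α)) = C * volume (E ∩ Icc A B) := by
    rw [lintegral_zCube cc h (fun y => zygFnE (ENNReal.ofReal |f y| / ENNReal.ofReal α))]
    have hpt : ∀ t : ℝ, zygFnE (ENNReal.ofReal |f (φ.symm t)| / ENNReal.ofReal α)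
        = indicator E (fun _ => C) t := by
      intro t
      rw [f_symm]
      by_cases ht : t ∈ E
      · rw [indicator_of_mem ht, indicator_of_mem ht]
        rw [abs_one, ← ENNReal.ofReal_div_of_pos hαpos]
        rw [zygFnE_ofReal _ (by positivity)]
        have h1α : 1/α = Real.sqrt h/100 := by rw [hα]; field_simp
        rw [h1α, hC]
      · rw [indicator_of_notMem ht, indicator_of_notMem ht]
        rw [abs_zero, ENNReal.ofReal_zero, ENNReal.zero_div]
        exact zygFnE_zero
    simp_rw [hpt]
    rw [lintegral_indicator E_meas]
    rw [setLIntegral_const, Measure.restrict_apply E_meas]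
  rw [hint]
  -- bound C * volume ≤ ofReal h
  have hub := UB A B (by simp only [hA, hB]; linarith)
  rw [hBA] at hub
  set ν : ℝ := (volume (E ∩ Icc A B)).toReal with hν
  have hvolne : volume (E ∩ Icc A B) ≠ ⊤ := by
    apply ne_top_of_le_ne_top ?_ (measure_mono (inter_subset_right))
    rw [Real.volume_Icc]
    exact ENNReal.ofReal_ne_top
  have hvol : volume (E ∩ Icc A B) = ENNReal.ofReal ν := (ENNReal.ofReal_toReal hvolne).symm
  have hCν : C * volume (E ∩ Icc A B) ≤ ENNReal.ofReal h := by
    have hΦ0 : (0:ℝ) ≤ (Real.sqrt h/100) * (1 + logPlus (Real.sqrt h/100)) := by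
      have := logPlus_nonneg (Real.sqrt h/100)
      have := Real.sqrt_nonneg h
      positivity
    rw [hvol, hC, ← ENNReal.ofReal_mul hΦ0]
    apply ENNReal.ofReal_le_ofReal
    have hss : Real.sqrt h * Real.sqrt h = h := Real.mul_self_sqrt (le_of_lt hh)
    have hν0 : 0 ≤ ν := ENNReal.toReal_nonneg
    nlinarith [logPlus_nonneg (Real.sqrt h / 100)]
  have hpow : (h:ℝ) ^ (1:ℕ) = h := pow_one h
  rw [hpow]
  calc (ENNReal.ofReal h)⁻¹ * (C * volume (E ∩ Icc A B))
      ≤ (ENNReal.ofReal h)⁻¹ * ENNReal.ofReal h := mul_le_mul_right hCν _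
    _ = 1 := ENNReal.inv_mul_cancel (by simp [hh]) ENNReal.ofReal_ne_top

lemma zygMorrey_f_ne_top : zygMorrey (1/2 : ℝ) f ≠ ⊤ := by
  have hle : zygMorrey (1/2 : ℝ) f ≤ ENNReal.ofReal 100 := by
    unfold zygMorrey zygMorreyE
    apply iSup_le; intro cc
    apply iSup_le; intro h
    apply iSup_le; intro hh
    have hsh : 0 < Real.sqrt h := Real.sqrt_pos.2 hh
    calc ENNReal.ofReal (h ^ ((1:ℝ)/2)) * zygAvgE (fun y => ENNReal.ofReal |f y|) cc h
        ≤ ENNReal.ofReal (h ^ ((1:ℝ)/2)) * ENNReal.ofReal (100 / Real.sqrt h) :=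
          mul_le_mul_right (zygAvg_f_le cc h hh) _
      _ = ENNReal.ofReal (Real.sqrt h * (100 / Real.sqrt h)) := by
          rw [← ENNReal.ofReal_mul (by positivity)]
          congr 2
          rw [Real.sqrt_eq_rpow]
      _ = ENNReal.ofReal 100 := by
          congr 1
          field_simp
  intro hc
  rw [hc] at hle
  exact absurd (lt_of_le_of_lt hle ENNReal.ofReal_lt_top) (lt_irrefl _)

end Part4

namespace Part5
open S15 Part2 Part3 Part4

lemma HLM_lower {k : ℕ} (hk : 1 ≤ k) {t : ℝ} (ht : p k + 1 ≤ t) :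
    ENNReal.ofReal ((t - p k)⁻¹) ≤ HLM f (φ.symm t) := by
  set h' : ℝ := t - p k with hh'
  have hh'pos : 0 < h' := by simp only [hh']; linarith
  set cen : Rn 1 := φ.symm ((p k + t)/2) with hcen
  have hcen0 : cen 0 = (p k + t)/2 := rfl
  have hmem : φ.symm t ∈ zCube cen h' := by
    rw [zCube_eq, mem_preimage, MeasurableEquiv.apply_symm_apply, hcen0, mem_Icc]
    constructor <;> simp only [hh'] <;> linarith
  have hIcc : Icc (cen 0 - h'/2) (cen 0 + h'/2) = Icc (p k) t := by
    rw [hcen0]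
    congr 1 <;> simp only [hh'] <;> ring
  have hint : (1:ℝ≥0∞) ≤ ∫⁻ y in zCube cen h', ENNReal.ofReal |f y| := by
    rw [lintegral_zCube cen h' (fun y => ENNReal.ofReal |f y|), hIcc]
    have h1 : (∫⁻ t' in Icc (p k) (p k + 1), ENNReal.ofReal |f (φ.symm t')|) = 1 := by
      have hcong : ∀ t' ∈ Icc (p k) (p k + 1),
          ENNReal.ofReal |f (φ.symm t')| = 1 := by
        intro t' ht'
        rw [f_symm, indicator_of_mem (bump_subset_E hk ht'), abs_one, ENNReal.ofReal_one]
      rw [setLIntegral_congr_fun measurableSet_Icc hcong]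
      rw [setLIntegral_one, Real.volume_Icc]
      norm_num
    rw [← h1]
    exact lintegral_mono_set (Icc_subset_Icc le_rfl (by linarith))
  unfold HLM maxE
  apply le_iSup_of_le cen
  apply le_iSup_of_le h'
  apply le_iSup_of_le hh'pos
  apply le_iSup_of_le hmem
  rw [pow_one]
  calc ENNReal.ofReal (h'⁻¹) = (ENNReal.ofReal h')⁻¹ := ENNReal.ofReal_inv_of_pos hh'pos
    _ = (ENNReal.ofReal h')⁻¹ * 1 := (mul_one _).symm
    _ ≤ (ENNReal.ofReal h')⁻¹ * ∫⁻ y in zCube cen h', ENNReal.ofReal |f y| :=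
        mul_le_mul_right hint _

lemma log_K_ge_four {K : ℕ} (hK : 400 ≤ K) : 5 ≤ Real.log K := by
  have hKpos : (0:ℝ) < K := by
    have : (400:ℝ) ≤ K := by exact_mod_cast hK
    linarith
  rw [Real.le_log_iff_exp_le hKpos]
  have h1 : Real.exp 1 ≤ 2.72 := by linarith [Real.exp_one_lt_d9]
  have h4 : Real.exp 5 = Real.exp 1 * Real.exp 1 * Real.exp 1 * Real.exp 1 * Real.exp 1 := by
    rw [show (5:ℝ) = 1+1+1+1+1 by norm_num, Real.exp_add, Real.exp_add, Real.exp_add, Real.exp_add]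
  have hepos := Real.exp_pos 1
  have hee : Real.exp 1 * Real.exp 1 ≤ 2.72*2.72 := by nlinarith
  have heeee : (Real.exp 1 * Real.exp 1) * (Real.exp 1 * Real.exp 1) ≤ (2.72*2.72)*(2.72*2.72) := by
    nlinarith
  have h400 : (400:ℝ) ≤ K := by exact_mod_cast hK
  have : Real.exp 5 ≤ 2.72*2.72*2.72*2.72*2.72 := by rw [h4]; nlinarith
  nlinarith

lemma log_K_pos {K : ℕ} (hK : 400 ≤ K) : 0 < Real.log K :=
  lt_of_lt_of_le (by norm_num) (log_K_ge_four hK)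

lemma twoI_le_sqrtK {K : ℕ} (hK : 400 ≤ K) :
    (2:ℝ)^(Nat.log 4 K) ≤ Real.sqrt K := by
  have h4 : (4:ℕ)^(Nat.log 4 K) ≤ K := Nat.pow_log_le_self 4 (by omega)
  have h4' : ((4:ℝ))^(Nat.log 4 K) ≤ K := by exact_mod_cast h4
  have h2 : (2:ℝ)^(Nat.log 4 K) * (2:ℝ)^(Nat.log 4 K) = (4:ℝ)^(Nat.log 4 K) := by
    rw [← mul_pow]; norm_num
  rw [show Real.sqrt (K:ℝ) = Real.sqrt K from rfl]
  rw [Real.le_sqrt (by positivity)]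
  · rw [sq]; linarith
  · exact Nat.cast_nonneg K

lemma slab_int {K k i : ℕ} (hK : 400 ≤ K) (hk1 : K/2 < k) (hk2 : k ≤ K)
    (hi : i < Nat.log 4 K) {α : ℝ} (hα : 0 < α)
    (hαA : α < Real.log K / (1000 * c (K+1))) :
    ENNReal.ofReal (Real.log K / (4*α)) ≤
      ∫⁻ t in Ioc (p k + 2^i) (p k + 2^(i+1)),
        zygFnE (HLM f (φ.symm t) / ENNReal.ofReal α) := by
  have hk1' : 1 ≤ k := by omega
  have hlogpos := log_K_pos hK
  have hcpos : 0 < c (K+1) := c_pos (by omega)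
  have h2i1 : (1:ℝ) ≤ 2^i := one_le_pow₀ (by norm_num)
  set u : ℝ := ((2:ℝ)^(i+1))⁻¹ / α with hu
  have h2ppos : (0:ℝ) < 2^(i+1) := by positivity
  have hupos : 0 < u := by rw [hu]; positivity
  -- u ≥ √K
  have hKpos : (0:ℝ) < K := by
    have : (400:ℝ) ≤ K := by exact_mod_cast hK; 
    linarith
  have hsqK : Real.sqrt (K:ℝ) * Real.sqrt (K:ℝ) = K := Real.mul_self_sqrt (le_of_lt hKpos)
  have hsqKpos : 0 < Real.sqrt (K:ℝ) := Real.sqrt_pos.2 hKpos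
  have h2I : (2:ℝ)^(i+1) ≤ Real.sqrt K := by
    calc (2:ℝ)^(i+1) ≤ (2:ℝ)^(Nat.log 4 K) := by
          apply pow_le_pow_right₀ (by norm_num) (by omega)
      _ ≤ Real.sqrt K := twoI_le_sqrtK hK
  have hαlt : α * (1000 * c (K+1)) < Real.log K := by
    rw [div_eq_mul_inv] at hαA
    have := (lt_div_iff₀ (by positivity : (0:ℝ) < 1000 * c (K+1))).1 (by
      rw [div_eq_mul_inv]; exact hαA)
    linarith
  have hcKlog : (K:ℝ) * Real.log K ≤ c (K+1) := by
    have h1 : c K ≤ c (K+1) := c_mono (Nat.le_succ K)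
    have h2 : (K:ℝ) * Real.log K ≤ (K:ℝ) * L K := by
      have : Real.log K ≤ L K := by unfold L; linarith [one_le_L K]
      nlinarith [hKpos]
    exact le_trans h2 h1
  have hαK : α * (K:ℝ) * 1000 < 1 := by
    have h1 : α * (1000 * ((K:ℝ) * Real.log K)) ≤ α * (1000 * c (K+1)) := by
      nlinarith [hα.le]
    have h2 : α * (1000 * ((K:ℝ) * Real.log K)) < Real.log K := lt_of_le_of_lt h1 hαlt
    nlinarith [hlogpos]
  have husqrt : Real.sqrt (K:ℝ) ≤ u := by
    have hkey : Real.sqrt (K:ℝ) * ((2:ℝ)^(i+1) * α) ≤ 1 := by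
      have h1 : Real.sqrt (K:ℝ) * ((2:ℝ)^(i+1) * α) ≤ Real.sqrt (K:ℝ) * (Real.sqrt (K:ℝ) * α) :=
        mul_le_mul_of_nonneg_left (mul_le_mul_of_nonneg_right h2I hα.le) hsqKpos.le
      have h2 : Real.sqrt (K:ℝ) * (Real.sqrt (K:ℝ) * α) = (K:ℝ) * α := by
        rw [← mul_assoc, hsqK]
      nlinarith
    have hYpos : (0:ℝ) < (2:ℝ)^(i+1) * α := by positivity
    have hid : u = ((2:ℝ)^(i+1) * α)⁻¹ := by rw [hu]; field_simp
    calc Real.sqrt (K:ℝ)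
        = Real.sqrt (K:ℝ) * ((2:ℝ)^(i+1) * α) * ((2:ℝ)^(i+1) * α)⁻¹ := by field_simp
      _ ≤ 1 * ((2:ℝ)^(i+1) * α)⁻¹ := by
          apply mul_le_mul_of_nonneg_right hkey (by positivity)
      _ = u := by rw [hid, one_mul]
  have hlpu : Real.log K / 2 ≤ logPlus u := by
    calc Real.log K / 2 = Real.log (Real.sqrt (K:ℝ)) := (Real.log_sqrt (le_of_lt hKpos)).symm
      _ ≤ Real.log u := Real.log_le_log hsqKpos husqrt
      _ ≤ logPlus u := le_max_left _ _
  -- pointwise bound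
  have hpt : ∀ t ∈ Ioc (p k + (2:ℝ)^i) (p k + 2^(i+1)),
      ENNReal.ofReal (u * (Real.log K / 2)) ≤
        zygFnE (HLM f (φ.symm t) / ENNReal.ofReal α) := by
    intro t ht
    obtain ⟨ht1, ht2⟩ := ht
    have htpk : p k + 1 ≤ t := by nlinarith
    have hdpos : (0:ℝ) < t - p k := by nlinarith
    have hH := HLM_lower hk1' htpk
    have hdinv : ((2:ℝ)^(i+1))⁻¹ ≤ (t - p k)⁻¹ := by
      apply inv_anti₀ hdpos
      linarith
    have hchain : ENNReal.ofReal u ≤ HLM f (φ.symm t) / ENNReal.ofReal α := by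
      have h1 : ENNReal.ofReal (((2:ℝ)^(i+1))⁻¹) / ENNReal.ofReal α ≤
          HLM f (φ.symm t) / ENNReal.ofReal α := by
        apply ENNReal.div_le_div_right
        exact le_trans (ENNReal.ofReal_le_ofReal hdinv) hH
      rw [← ENNReal.ofReal_div_of_pos hα] at h1
      exact h1
    calc ENNReal.ofReal (u * (Real.log K / 2))
        ≤ ENNReal.ofReal (u * (1 + logPlus u)) := by
          apply ENNReal.ofReal_le_ofReal
          apply mul_le_mul_of_nonneg_left (by linarith) hupos.le
      _ = zygFnE (ENNReal.ofReal u) := (zygFnE_ofReal u hupos.le).symm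
      _ ≤ zygFnE (HLM f (φ.symm t) / ENNReal.ofReal α) := zygFnE_mono hchain
  -- integrate
  have hone : ENNReal.ofReal (Real.log K / (4*α)) =
      ENNReal.ofReal (u * (Real.log K / 2)) * volume (Ioc (p k + (2:ℝ)^i) (p k + 2^(i+1))) := by
    rw [Real.volume_Ioc]
    rw [← ENNReal.ofReal_mul (by positivity)]
    congr 1
    have hlen : p k + (2:ℝ)^(i+1) - (p k + 2^i) = 2^i := by
      rw [pow_succ]; ring
    rw [hlen, hu, pow_succ]
    have h2ine : (2:ℝ)^i ≠ 0 := by positivity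
    field_simp
    ring
  rw [hone]
  calc ENNReal.ofReal (u * (Real.log K / 2)) * volume (Ioc (p k + (2:ℝ)^i) (p k + 2^(i+1)))
      = ∫⁻ _ in Ioc (p k + (2:ℝ)^i) (p k + 2^(i+1)), ENNReal.ofReal (u * (Real.log K / 2)) := by
        rw [setLIntegral_const, mul_comm]
    _ ≤ ∫⁻ t in Ioc (p k + (2:ℝ)^i) (p k + 2^(i+1)),
          zygFnE (HLM f (φ.symm t) / ENNReal.ofReal α) := by
        apply lintegral_mono_ae
        exact (ae_restrict_iff' measurableSet_Ioc).2 (ae_of_all _ hpt)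

end Part5

namespace Part6
open S15 Part2 Part3 Part4 Part5

lemma sqrtK_le_K {K : ℕ} (hK : 400 ≤ K) : Real.sqrt (K:ℝ) ≤ (K:ℝ) := by
  have h1 : (1:ℝ) ≤ (K:ℝ) := by
    have : (400:ℝ) ≤ K := by exact_mod_cast hK
    linarith
  have h2 : Real.sqrt (K:ℝ) * Real.sqrt (K:ℝ) = K := Real.mul_self_sqrt (by linarith)
  have h3 : (1:ℝ) ≤ Real.sqrt K := Real.one_le_sqrt.2 h1
  nlinarith

lemma gap_ok {K k : ℕ} (hK : 400 ≤ K) (hk1 : K/2 < k) (hk2 : k ≤ K) {i : ℕ}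
    (hi : i < Nat.log 4 K) : p k + (2:ℝ)^(i+1) ≤ p (k+1) := by
  have h2I : (2:ℝ)^(i+1) ≤ Real.sqrt K := by
    calc (2:ℝ)^(i+1) ≤ (2:ℝ)^(Nat.log 4 K) := by
          apply pow_le_pow_right₀ (by norm_num) (by omega)
      _ ≤ Real.sqrt K := twoI_le_sqrtK hK
  have hK2k : (K:ℝ) ≤ 2*(k:ℝ) := by
    have : K ≤ 2*k := by omega
    exact_mod_cast this
  have hck : (k:ℝ) ≤ c k := k_le_c k
  have hck1 : ((k:ℝ)+1) ≤ c (k+1) := by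
    have := k_le_c (k+1)
    push_cast at this
    linarith
  have hgap := p_succ_gap k
  have := sqrtK_le_K hK
  linarith

lemma count_ineq {K : ℕ} (hK : 400 ≤ K) {α : ℝ} (hα : 0 < α)
    (hαA : α < Real.log K / (1000 * c (K+1))) :
    2 * p (K+1) ≤ (((K - K/2) * Nat.log 4 K : ℕ):ℝ) * (Real.log K / (4*α)) := by
  have hlog4 := log_K_ge_four hK
  have hlogpos := log_K_pos hK
  have hcpos : 0 < c (K+1) := c_pos (by omega)
  have hKR : (400:ℝ) ≤ (K:ℝ) := by exact_mod_cast hK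
  have hαlt : α * (1000 * c (K+1)) < Real.log K := by
    have := (lt_div_iff₀ (by positivity : (0:ℝ) < 1000 * c (K+1))).1 hαA
    linarith
  have h250 : 250 * c (K+1) ≤ Real.log K/(4*α) := by
    rw [le_div_iff₀ (by positivity)]
    nlinarith
  have hn2 : (K:ℝ) ≤ 2 * ((K - K/2 : ℕ):ℝ) := by
    have : K ≤ 2*(K - K/2) := by omega
    exact_mod_cast this
  set I := Nat.log 4 K with hI
  have hIK : Real.log K < ((I:ℝ)+1) * 1.3862944 := by
    have h1 : K < 4^(I+1) := Nat.lt_pow_succ_log_self (by norm_num) K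
    have h1' : (K:ℝ) < (4:ℝ)^(I+1) := by exact_mod_cast h1
    have h2 : Real.log K < Real.log ((4:ℝ)^(I+1)) := Real.log_lt_log (by linarith) h1'
    rw [Real.log_pow] at h2
    have h3 : Real.log 4 ≤ 1.3862944 := by
      rw [show (4:ℝ) = 2*2 by norm_num, Real.log_mul (by norm_num) (by norm_num)]
      linarith [Real.log_two_lt_d9]
    have hI0 : (0:ℝ) ≤ (I:ℝ) := Nat.cast_nonneg I
    calc Real.log K < ((I+1:ℕ):ℝ) * Real.log 4 := h2
      _ ≤ ((I+1:ℕ):ℝ) * 1.3862944 := by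
          apply mul_le_mul_of_nonneg_left h3 (by positivity)
      _ = ((I:ℝ)+1) * 1.3862944 := by push_cast; ring
  have hcup : c (K+1) ≤ 4 * (K:ℝ) * Real.log K := by
    have hlogsucc : Real.log ((K:ℝ)+1) ≤ 1 + Real.log K := by
      have := log_succ_le K (by omega)
      unfold L at this
      linarith
    have hceq : c (K+1) = ((K:ℝ)+1) * (1 + Real.log ((K:ℝ)+1)) := by
      unfold c L; push_cast; ring
    have hK1 : (K:ℝ) + 1 ≤ 2*K := by linarith
    have hlsucc0 : 0 ≤ Real.log ((K:ℝ)+1) := Real.log_nonneg (by linarith)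
    rw [hceq]
    nlinarith
  have hcast : (((K - K/2) * I : ℕ):ℝ) = ((K - K/2:ℕ):ℝ) * (I:ℝ) := by push_cast; ring
  have hI0 : (0:ℝ) ≤ (I:ℝ) := Nat.cast_nonneg I
  have hnn0 : (0:ℝ) ≤ ((K - K/2:ℕ):ℝ) := Nat.cast_nonneg _
  have h125 : c (K+1) ≤ 125 * (((K - K/2) * I:ℕ):ℝ) := by
    rw [hcast]
    have hIlow : Real.log K / 1.3862944 - 1 < (I:ℝ) := by
      have h13pos : (0:ℝ) < 1.3862944 := by norm_num
      rw [div_sub' (c := (1.3862944:ℝ)) (by norm_num), div_lt_iff₀ h13pos]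
      linarith
    -- 4 K lg ≤ 125 * (n * I), n ≥ K/2
    have hstep : 4 * (K:ℝ) * Real.log K ≤ 125 * (((K - K/2:ℕ):ℝ) * (I:ℝ)) := by
      have hI2 : Real.log K / 2 ≤ (I:ℝ) := by nlinarith
      nlinarith
    linarith
  have hx : p (K+1) = c (K+1) * c (K+1) := p_eq (K+1)
  have hcastnn : (0:ℝ) ≤ (((K - K/2) * I:ℕ):ℝ) := Nat.cast_nonneg _
  calc 2 * p (K+1) = 2 * (c (K+1) * c (K+1)) := by rw [hx]
    _ ≤ (((K - K/2) * I:ℕ):ℝ) * (250 * c (K+1)) := by nlinarith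
    _ ≤ (((K - K/2) * I:ℕ):ℝ) * (Real.log K/(4*α)) :=
        mul_le_mul_of_nonneg_left h250 hcastnn

lemma lower_int {K : ℕ} (hK : 400 ≤ K) {α : ℝ} (hα : 0 < α)
    (hαA : α < Real.log K / (1000 * c (K+1))) :
    2 * ENNReal.ofReal (p (K+1)) ≤
      ∫⁻ y in zCube (φ.symm (p (K+1)/2)) (p (K+1)),
        zygFnE (HLM f y / ENNReal.ofReal α) := by
  set x : ℝ := p (K+1) with hxdef
  set I := Nat.log 4 K with hI
  set s : Finset (ℕ×ℕ) := (Finset.Ioc (K/2) K) ×ˢ (Finset.range I) with hs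
  set slabs : ℕ×ℕ → Set ℝ := fun q => Ioc (p q.1 + 2^q.2) (p q.1 + 2^(q.2+1)) with hslabs
  rw [lintegral_zCube]
  have hIcc : Icc ((φ.symm (x/2)) 0 - x/2) ((φ.symm (x/2)) 0 + x/2) = Icc 0 x := by
    have h0 : (φ.symm (x/2)) 0 = x/2 := rfl
    rw [h0]
    congr 1 <;> ring
  rw [hIcc]
  have hmemfact : ∀ q ∈ s, (K/2 < q.1 ∧ q.1 ≤ K) ∧ q.2 < I := by
    intro q hq
    rw [hs, Finset.mem_product, Finset.mem_Ioc, Finset.mem_range] at hq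
    exact hq
  have hd : (↑s : Set (ℕ×ℕ)).PairwiseDisjoint slabs := by
    intro q hq q' hq' hne
    have hq1 := hmemfact q (Finset.mem_coe.1 hq)
    have hq2 := hmemfact q' (Finset.mem_coe.1 hq')
    have key : ∀ a b : ℕ×ℕ, ((K/2 < a.1 ∧ a.1 ≤ K) ∧ a.2 < I) →
        ((K/2 < b.1 ∧ b.1 ≤ K) ∧ b.2 < I) →
        (a.1 < b.1 ∨ (a.1 = b.1 ∧ a.2 < b.2)) → Disjoint (slabs a) (slabs b) := by
      rintro a b ha hb (hab | ⟨hab1, hab2⟩)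
      · rw [hslabs, Set.Ioc_disjoint_Ioc]
        have h1 : p a.1 + (2:ℝ)^(a.2+1) ≤ p (a.1+1) :=
          gap_ok hK ha.1.1 ha.1.2 ha.2
        have h2 : p (a.1+1) ≤ p b.1 := p_mono (by omega)
        have h3 : (0:ℝ) < 2^b.2 := by positivity
        calc min (p a.1 + (2:ℝ)^(a.2+1)) (p b.1 + 2^(b.2+1)) ≤ p a.1 + 2^(a.2+1) :=
              min_le_left _ _
          _ ≤ p b.1 + 2^b.2 := by linarith
          _ ≤ max (p a.1 + 2^a.2) (p b.1 + 2^b.2) := le_max_right _ _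
      · rw [hslabs, Set.Ioc_disjoint_Ioc, hab1]
        have h1 : (2:ℝ)^(a.2+1) ≤ 2^b.2 := by
          apply pow_le_pow_right₀ (by norm_num) (by omega)
        calc min (p b.1 + (2:ℝ)^(a.2+1)) (p b.1 + 2^(b.2+1)) ≤ p b.1 + 2^(a.2+1) :=
              min_le_left _ _
          _ ≤ p b.1 + 2^b.2 := by linarith
          _ ≤ max (p b.1 + 2^a.2) (p b.1 + 2^b.2) := le_max_right _ _
    rcases lt_trichotomy q.1 q'.1 with h | h | h
    · exact key q q' hq1 hq2 (Or.inl h)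
    · rcases lt_or_gt_of_ne (fun hc : q.2 = q'.2 => hne (Prod.ext h hc)) with h2 | h2
      · exact key q q' hq1 hq2 (Or.inr ⟨h, h2⟩)
      · exact (key q' q hq2 hq1 (Or.inr ⟨h.symm, h2⟩)).symm
    · exact (key q' q hq2 hq1 (Or.inl h)).symm
  have hsub : ∀ q ∈ s, slabs q ⊆ Icc 0 x := by
    intro q hq t ht
    have hf := hmemfact q hq
    obtain ⟨ht1, ht2⟩ := ht
    have hp0 : 0 ≤ p q.1 := p_nonneg q.1
    have h2pos : (0:ℝ) < 2^q.2 := by positivity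
    constructor
    · linarith
    · have h1 : p q.1 + (2:ℝ)^(q.2+1) ≤ p (q.1+1) := gap_ok hK hf.1.1 hf.1.2 hf.2
      have h2 : p (q.1+1) ≤ p (K+1) := p_mono (by omega)
      simp only [hxdef]
      linarith
  have hcard : s.card = (K - K/2) * I := by
    rw [hs, Finset.card_product, Nat.card_Ioc, Finset.card_range]
  calc 2 * ENNReal.ofReal x
      = ENNReal.ofReal (2 * x) := by
        rw [ENNReal.ofReal_mul (by norm_num), ENNReal.ofReal_ofNat]
    _ ≤ ENNReal.ofReal ((((K - K/2) * I : ℕ):ℝ) * (Real.log K / (4*α))) :=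
        ENNReal.ofReal_le_ofReal (count_ineq hK hα hαA)
    _ = (((K - K/2) * I : ℕ):ℝ≥0∞) * ENNReal.ofReal (Real.log K / (4*α)) := by
        rw [ENNReal.ofReal_mul (Nat.cast_nonneg _), ENNReal.ofReal_natCast]
    _ = s.card • ENNReal.ofReal (Real.log K / (4*α)) := by
        rw [hcard, nsmul_eq_mul]
    _ ≤ ∑ q ∈ s, ∫⁻ t in slabs q, zygFnE (HLM f (φ.symm t) / ENNReal.ofReal α) := by
        apply Finset.card_nsmul_le_sum
        intro q hq
        have hf := hmemfact q hq
        exact slab_int hK hf.1.1 hf.1.2 hf.2 hα hαA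
    _ = ∫⁻ t in ⋃ q ∈ s, slabs q, zygFnE (HLM f (φ.symm t) / ENNReal.ofReal α) :=
        (lintegral_biUnion_finset hd (fun q _ => measurableSet_Ioc) _).symm
    _ ≤ ∫⁻ t in Icc 0 x, zygFnE (HLM f (φ.symm t) / ENNReal.ofReal α) :=
        lintegral_mono_set (iUnion₂_subset hsub)

lemma zygAvg_HLM_lower {K : ℕ} (hK : 400 ≤ K) :
    ENNReal.ofReal (Real.log K / (1000 * c (K+1))) ≤
      zygAvgE (HLM f) (φ.symm (p (K+1)/2)) (p (K+1)) := by
  apply le_sInf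
  rintro a ⟨α, hα, rfl, hcond⟩
  apply ENNReal.ofReal_le_ofReal
  by_contra hcon
  push_neg at hcon
  have hint := lower_int hK hα hcon
  have hx : (0:ℝ) < p (K+1) := lt_of_lt_of_le one_pos (one_le_p (by omega))
  rw [pow_one] at hcond
  have hid : (ENNReal.ofReal (p (K+1)))⁻¹ * (2 * ENNReal.ofReal (p (K+1))) = 2 := by
    rw [mul_comm 2 (ENNReal.ofReal (p (K+1))), ← mul_assoc,
      ENNReal.inv_mul_cancel (by simp [hx]) ENNReal.ofReal_ne_top, one_mul]
  have h2 : (2:ℝ≥0∞) ≤ (ENNReal.ofReal (p (K+1)))⁻¹ *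
      ∫⁻ y in zCube (φ.symm (p (K+1)/2)) (p (K+1)),
        zygFnE (HLM f y / ENNReal.ofReal α) := by
    calc (2:ℝ≥0∞) = (ENNReal.ofReal (p (K+1)))⁻¹ * (2 * ENNReal.ofReal (p (K+1))) := hid.symm
      _ ≤ (ENNReal.ofReal (p (K+1)))⁻¹ *
          ∫⁻ y in zCube (φ.symm (p (K+1)/2)) (p (K+1)),
            zygFnE (HLM f y / ENNReal.ofReal α) := mul_le_mul_right hint _
  have hcontra := le_trans h2 hcond
  norm_num at hcontra

lemma zygMorreyE_HLM_top : zygMorreyE (1/2 : ℝ) (HLM f) = ⊤ := by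
  by_contra hne
  have hbound : ∀ K : ℕ, 400 ≤ K →
      ENNReal.ofReal (Real.log K / 1000) ≤ zygMorreyE (1/2 : ℝ) (HLM f) := by
    intro K hK
    have hcpos : 0 < c (K+1) := c_pos (by omega)
    have hx : (0:ℝ) < p (K+1) := lt_of_lt_of_le one_pos (one_le_p (by omega))
    have h1 : (p (K+1)) ^ ((1:ℝ)/2) = c (K+1) := by
      rw [← Real.sqrt_eq_rpow, sqrt_p]
    have hterm : ENNReal.ofReal (Real.log K / 1000) ≤
        ENNReal.ofReal ((p (K+1)) ^ ((1:ℝ)/2)) *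
          zygAvgE (HLM f) (φ.symm (p (K+1)/2)) (p (K+1)) := by
      have heq : Real.log K / 1000 = c (K+1) * (Real.log K / (1000 * c (K+1))) := by
        field_simp
      calc ENNReal.ofReal (Real.log K / 1000)
          = ENNReal.ofReal (c (K+1)) * ENNReal.ofReal (Real.log K / (1000 * c (K+1))) := by
            rw [← ENNReal.ofReal_mul (c_nonneg (K+1)), ← heq]
        _ ≤ ENNReal.ofReal (c (K+1)) *
              zygAvgE (HLM f) (φ.symm (p (K+1)/2)) (p (K+1)) :=
            mul_le_mul_right (zygAvg_HLM_lower hK) _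
        _ = ENNReal.ofReal ((p (K+1)) ^ ((1:ℝ)/2)) *
              zygAvgE (HLM f) (φ.symm (p (K+1)/2)) (p (K+1)) := by rw [h1]
    refine le_trans hterm ?_
    unfold zygMorreyE
    apply le_iSup_of_le (φ.symm (p (K+1)/2))
    apply le_iSup_of_le (p (K+1))
    exact le_iSup_of_le hx le_rfl
  set M := (zygMorreyE (1/2 : ℝ) (HLM f)).toReal with hM
  set K := max 400 ⌈Real.exp (1000*(M+1))⌉₊ with hK
  have hK4 : 400 ≤ K := le_max_left _ _
  have hKpos : (0:ℝ) < K := by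
    have : (400:ℝ) ≤ K := by exact_mod_cast hK4
    linarith
  have hlogK : 1000*(M+1) ≤ Real.log K := by
    rw [Real.le_log_iff_exp_le hKpos]
    calc Real.exp (1000*(M+1)) ≤ ⌈Real.exp (1000*(M+1))⌉₊ := Nat.le_ceil _
      _ ≤ (K:ℝ) := by exact_mod_cast le_max_right 400 ⌈Real.exp (1000*(M+1))⌉₊
  have hle := hbound K hK4
  rw [ENNReal.ofReal_le_iff_le_toReal hne] at hle
  rw [← hM] at hle
  have hM0 : 0 ≤ M := ENNReal.toReal_nonneg
  linarith

end Part6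

end Aux15

/-- The Hardy–Littlewood maximal operator is not bounded on the
Zygmund–Morrey space `M_{L(1+log⁺L),1/2}(ℝ)`: there is a measurable `f` with
`‖f‖_{M_{L(1+log⁺L),1/2}} < ∞` but `‖Mf‖_{M_{L(1+log⁺L),1/2}} = ∞`. -/
theorem stmt15 :
    ∃ f : Rn 1 → ℝ, Measurable f ∧
      zygMorrey (1 / 2 : ℝ) f ≠ ⊤ ∧
      zygMorreyE (1 / 2 : ℝ) (HLM f) = ⊤ :=
  ⟨Part4.f, Part4.f_meas, Part4.zygMorrey_f_ne_top, Part6.zygMorreyE_HLM_top⟩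

end
end

section
/- Let 0 < λ < n. The iterated maximal operator M² = M ∘ M is bounded from the Zygmund–Morrey space M_{L(1+log⁺L),λ}(ℝⁿ) to the weak Zygmund–Morrey space WM_{L(1+log⁺L),λ}(ℝⁿ): there is c > 0, independent of f, such that ‖M²f‖_{WM_{L(1+log⁺L),λ}} ≤ c ‖f‖_{M_{L(1+log⁺L),λ}} for all f. -/
open MeasureTheory ENNReal Set

noncomputable section

namespace S16
variable {n : ℕ}

lemma measurableSet_zCube (c : Rn n) (h : ℝ) : MeasurableSet (zCube c h) := by
  have : zCube c h = ⋂ i, {x : Rn n | |x i - c i| ≤ h/2} := by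
    ext x; simp [zCube, Set.mem_iInter]
  rw [this]
  refine MeasurableSet.iInter fun i => ?_
  have hm : Measurable fun x : Rn n => x i :=
    (EuclideanSpace.proj (𝕜 := ℝ) (i : Fin n)).continuous.measurable
  exact measurableSet_le ((hm.sub measurable_const).abs) measurable_const

lemma isClosed_zCube (c : Rn n) (h : ℝ) : IsClosed (zCube c h) := by
  have : zCube c h = ⋂ i, (fun x : Rn n => |x i - c i|) ⁻¹' (Iic (h/2)) := by
    ext x; simp [zCube, Set.mem_iInter]
  rw [this]
  refine isClosed_iInter fun i => IsClosed.preimage ?_ isClosed_Iic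
  exact (((EuclideanSpace.proj (𝕜 := ℝ) i).continuous).sub continuous_const).abs

lemma volume_zCube (c : Rn n) {h : ℝ} (hh : 0 ≤ h) :
    volume (zCube c h) = ENNReal.ofReal (h ^ n) := by
  have : zCube c h = (MeasurableEquiv.toLp 2 (Fin n → ℝ)).symm ⁻¹'
      (Set.univ.pi fun i => Icc (c i - h/2) (c i + h/2)) := by
    ext x
    have hxi : ∀ (x : Rn n) (i : Fin n), (MeasurableEquiv.toLp 2 (Fin n → ℝ)).symm x i = x i :=
      fun _ _ => rfl
    simp only [zCube, Set.mem_preimage, Set.mem_pi, Set.mem_univ, forall_true_left,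
      Set.mem_Icc, Set.mem_setOf_eq, abs_le, hxi]
    constructor
    · intro hx i; have := hx i; constructor <;> linarith [(this).1, (this).2]
    · intro hx i; have := hx i; constructor <;> linarith [(this).1, (this).2]
  rw [this, (EuclideanSpace.volume_preserving_symm_measurableEquiv_toLp (Fin n)).measure_preimage
    ((MeasurableSet.univ_pi fun i => measurableSet_Icc).nullMeasurableSet)]
  rw [volume_pi_pi]
  simp [Real.volume_Icc, ← ENNReal.ofReal_pow hh]

lemma zCube_mono (c : Rn n) {h h' : ℝ} (hle : h ≤ h') : zCube c h ⊆ zCube c h' := by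
  intro y hy i; exact le_trans (hy i) (by linarith)

lemma zCube_subset {c₁ c₂ : Rn n} {h₁ h₂ : ℝ} {z : Rn n}
    (hz1 : z ∈ zCube c₁ h₁) (hz2 : z ∈ zCube c₂ h₂) :
    zCube c₁ h₁ ⊆ zCube c₂ (2*h₁ + h₂) := by
  intro y hy i
  have e1 := hy i; have e2 := hz1 i; have e3 := hz2 i
  have : |y i - c₂ i| ≤ |y i - c₁ i| + |z i - c₁ i| + |z i - c₂ i| := by
    have := abs_sub_abs_le_abs_sub (y i) (c₁ i)
    calc |y i - c₂ i| = |(y i - c₁ i) - (z i - c₁ i) + (z i - c₂ i)| := by ring_nf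
    _ ≤ |(y i - c₁ i) - (z i - c₁ i)| + |z i - c₂ i| := abs_add_le _ _
    _ ≤ |y i - c₁ i| + |z i - c₁ i| + |z i - c₂ i| := by
        have := abs_sub (y i - c₁ i) (z i - c₁ i); linarith
  linarith

lemma le_maxE {g : Rn n → ℝ≥0∞} {x c : Rn n} {h : ℝ} (hh : 0 < h) (hx : x ∈ zCube c h) :
    (ENNReal.ofReal (h ^ n))⁻¹ * ∫⁻ y in zCube c h, g y ≤ maxE g x := by
  refine le_trans (le_refl _) ?_
  exact le_iSup_of_le c <| le_iSup_of_le h <| le_iSup_of_le hh <| le_iSup_of_le hx (le_refl _)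

lemma maxE_le {g : Rn n → ℝ≥0∞} {x : Rn n} {A : ℝ≥0∞}
    (hA : ∀ c : Rn n, ∀ h : ℝ, 0 < h → x ∈ zCube c h →
      (ENNReal.ofReal (h ^ n))⁻¹ * ∫⁻ y in zCube c h, g y ≤ A) : maxE g x ≤ A := by
  refine iSup_le fun c => iSup_le fun h => iSup_le fun hh => iSup_le fun hx => hA c h hh hx

lemma maxE_mono {g g' : Rn n → ℝ≥0∞} (hgg : ∀ y, g y ≤ g' y) (x : Rn n) :
    maxE g x ≤ maxE g' x := by
  refine maxE_le fun c h hh hx => le_trans ?_ (le_maxE hh hx)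
  exact mul_le_mul_right (lintegral_mono fun y => hgg y) _

lemma maxE_congr_ae {g g' : Rn n → ℝ≥0∞} (hgg : g =ᵐ[volume] g') (x : Rn n) :
    maxE g x = maxE g' x := by
  unfold maxE
  congr 1; ext c; congr 1; ext h; congr 1; ext hh; congr 1; ext hx
  congr 1
  exact lintegral_congr_ae (ae_restrict_of_ae hgg)

lemma exists_gt_of_lt_maxE {g : Rn n → ℝ≥0∞} {x : Rn n} {s : ℝ≥0∞} (hs : s < maxE g x) :
    ∃ c h, 0 < h ∧ x ∈ zCube c h ∧
      s < (ENNReal.ofReal (h ^ n))⁻¹ * ∫⁻ y in zCube c h, g y := by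
  obtain ⟨c, hc⟩ := lt_iSup_iff.mp hs
  obtain ⟨h, hh⟩ := lt_iSup_iff.mp hc
  obtain ⟨h1, h2⟩ := lt_iSup_iff.mp hh
  obtain ⟨h3, h4⟩ := lt_iSup_iff.mp h2
  exact ⟨c, h, h1, h3, h4⟩


def openCube (c : Rn n) (h : ℝ) : Set (Rn n) := {x | ∀ i, |x i - c i| < h / 2}

lemma isOpen_openCube (c : Rn n) (h : ℝ) : IsOpen (openCube c h) := by
  have : openCube c h = ⋂ i, (fun x : Rn n => |x i - c i|) ⁻¹' (Iio (h/2)) := by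
    ext x; simp [openCube, Set.mem_iInter]
  rw [this]
  exact isOpen_iInter_of_finite fun i => IsOpen.preimage
    ((((EuclideanSpace.proj (𝕜 := ℝ) i).continuous).sub continuous_const).abs) isOpen_Iio

lemma openCube_subset (c : Rn n) (h : ℝ) : openCube c h ⊆ zCube c h :=
  fun x hx i => le_of_lt (hx i)

lemma mem_openCube_of_mem {c x : Rn n} {h h' : ℝ} (hx : x ∈ zCube c h) (hh : h < h') :
    x ∈ openCube c h' := fun i => lt_of_le_of_lt (hx i) (by linarith)

lemma exists_open_cube_avg_gt {g : Rn n → ℝ≥0∞} {x : Rn n} {s : ℝ≥0∞}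
    (hs : s < maxE g x) (hstop : s ≠ ⊤) :
    ∃ c u, 0 < u ∧ x ∈ openCube c u ∧
      s < (ENNReal.ofReal (u ^ n))⁻¹ * ∫⁻ y in zCube c u, g y := by
  obtain ⟨c, h, hh, hx, havg⟩ := exists_gt_of_lt_maxE hs
  set I := ∫⁻ y in zCube c h, g y with hI
  by_cases hItop : I = ⊤
  · refine ⟨c, h + 1, by linarith, mem_openCube_of_mem hx (by linarith), ?_⟩
    have h1 : (∫⁻ y in zCube c (h+1), g y) = ⊤ :=
      top_le_iff.mp <| hItop ▸ lintegral_mono_set (zCube_mono c (by linarith))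
    rw [h1, ENNReal.mul_top]
    · exact lt_top_iff_ne_top.mpr hstop
    · simp [ENNReal.inv_eq_zero]
  · have hd0 : ENNReal.ofReal (h ^ n) ≠ 0 := by
      simp [ENNReal.ofReal_eq_zero, not_le, pow_pos hh]
    have hdtop : ENNReal.ofReal (h ^ n) ≠ ⊤ := ENNReal.ofReal_ne_top
    have hsd : s * ENNReal.ofReal (h ^ n) < I := by
      rw [← ENNReal.lt_div_iff_mul_lt (Or.inl hd0) (Or.inl hdtop)]
      rwa [ENNReal.div_eq_inv_mul]
    have hIpos : 0 < I := lt_of_le_of_lt (zero_le) hsd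
    have hItR : 0 < I.toReal := ENNReal.toReal_pos hIpos.ne' hItop
    have hlt : s.toReal * h ^ n < I.toReal := by
      have := ENNReal.toReal_lt_toReal (a := s * ENNReal.ofReal (h ^ n)) (b := I)
        (ENNReal.mul_ne_top hstop hdtop) hItop |>.mpr hsd
      rwa [ENNReal.toReal_mul, ENNReal.toReal_ofReal (le_of_lt (pow_pos hh n))] at this
    have hψ : Continuous fun u : ℝ => s.toReal * u ^ n :=
      continuous_const.mul (continuous_pow n)
    have hten : Filter.Tendsto (fun u : ℝ => s.toReal * u ^ n) (nhdsWithin h (Set.Ioi h))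
        (nhds (s.toReal * h ^ n)) := (hψ.tendsto h).mono_left nhdsWithin_le_nhds
    obtain ⟨u, hu1, hu2⟩ := ((hten.eventually_lt_const hlt).and self_mem_nhdsWithin).exists
    have hupos : 0 < u := lt_trans hh hu2
    refine ⟨c, u, hupos, mem_openCube_of_mem hx hu2, ?_⟩
    have hud0 : ENNReal.ofReal (u ^ n) ≠ 0 := by
      simp [ENNReal.ofReal_eq_zero, not_le, pow_pos hupos]
    have hsu : s * ENNReal.ofReal (u ^ n) < I := by
      rw [← ENNReal.ofReal_toReal hstop, ← ENNReal.ofReal_mul ENNReal.toReal_nonneg,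
        ← ENNReal.ofReal_toReal hItop]
      exact ENNReal.ofReal_lt_ofReal_iff hItR |>.mpr hu1
    have : s < (ENNReal.ofReal (u ^ n))⁻¹ * I := by
      rw [← ENNReal.div_eq_inv_mul]
      exact (ENNReal.lt_div_iff_mul_lt (Or.inl hud0) (Or.inl ENNReal.ofReal_ne_top)).mpr hsu
    exact lt_of_lt_of_le this <| mul_le_mul_right
      (lintegral_mono_set (zCube_mono c (le_of_lt hu2))) _

lemma isOpen_maxE_gt (g : Rn n → ℝ≥0∞) (s : ℝ≥0∞) : IsOpen {x | s < maxE g x} := by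
  by_cases hstop : s = ⊤
  · have : {x : Rn n | s < maxE (n := n) g x} = ∅ := by
      ext x; simp [hstop, not_top_lt]
    rw [this]; exact isOpen_empty
  · rw [isOpen_iff_forall_mem_open]
    intro x hx
    obtain ⟨c, u, hu, hxo, havg⟩ := exists_open_cube_avg_gt hx hstop
    exact ⟨openCube c u, fun y hy =>
      lt_of_lt_of_le havg (le_maxE hu (openCube_subset c u hy)),
      isOpen_openCube c u, hxo⟩

lemma measurable_maxE (g : Rn n → ℝ≥0∞) : Measurable (maxE g) :=
  measurable_of_Ioi fun s => (isOpen_maxE_gt g s).measurableSet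


lemma mul_ofReal_le_of_lt_avg {s I : ℝ≥0∞} {h : ℝ} (hh : 0 < h)
    (hs : s < (ENNReal.ofReal (h ^ n))⁻¹ * I) : s * ENNReal.ofReal (h ^ n) ≤ I := by
  have hd0 : ENNReal.ofReal (h ^ n) ≠ 0 := by
    simp [ENNReal.ofReal_eq_zero, not_le, pow_pos hh]
  rw [← ENNReal.div_eq_inv_mul] at hs
  exact le_of_lt ((ENNReal.lt_div_iff_mul_lt (Or.inl hd0) (Or.inl ENNReal.ofReal_ne_top)).mp hs)

lemma weak11 (g : Rn n → ℝ≥0∞) (s : ℝ≥0∞) :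
    s * volume {x | s < maxE g x} ≤ (5:ℝ≥0∞)^n * ∫⁻ y, g y := by
  by_cases hstop : s = ⊤
  · have : {x : Rn n | s < maxE (n := n) g x} = ∅ := by
      ext x; simp [hstop, not_top_lt]
    simp [this]
  rw [(isOpen_maxE_gt g s).measure_eq_iSup_isCompact]
  simp only [ENNReal.mul_iSup]
  refine iSup_le fun K => iSup_le fun hKE => iSup_le fun hK => ?_
  -- choose cubes
  have hch : ∀ x : K, ∃ c u, 0 < u ∧ (x : Rn n) ∈ openCube c u ∧
      s < (ENNReal.ofReal (u ^ n))⁻¹ * ∫⁻ y in zCube c u, g y :=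
    fun x => exists_open_cube_avg_gt (hKE x.2) hstop
  choose cc uu hu hxo havg using hch
  obtain ⟨F, hF⟩ := hK.elim_finite_subcover (fun x : K => openCube (cc x) (uu x))
    (fun x => isOpen_openCube _ _) (fun x hx => Set.mem_iUnion.mpr ⟨⟨x, hx⟩, hxo ⟨x, hx⟩⟩)
  by_cases hFne : F = ∅
  · subst hFne
    simp only [Finset.notMem_empty, Set.iUnion_of_empty, Set.iUnion_empty] at hF
    have : volume K = 0 := le_antisymm (le_trans (measure_mono hF) (by simp)) (zero_le)
    simp [this]
  have hFne' : F.Nonempty := Finset.nonempty_iff_ne_empty.mpr hFne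
  set R := F.sup' hFne' uu with hR
  obtain ⟨U, hUF, hUd, hUc⟩ := Vitali.exists_disjoint_subfamily_covering_enlargement
    (fun a : K => zCube (cc a) (uu a)) (↑F) uu 2 one_lt_two
    (fun a _ => le_of_lt (hu a)) R (fun a ha => Finset.le_sup' uu ha)
    (fun a _ => ⟨a, openCube_subset _ _ (hxo a)⟩)
  have hUfin : U.Finite := F.finite_toSet.subset hUF
  have hcov : K ⊆ ⋃ b ∈ hUfin.toFinset, zCube (cc b) (5 * uu b) := by
    intro y hy
    obtain ⟨a, haF, hya⟩ := Set.mem_iUnion₂.mp (hF hy)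
    obtain ⟨b, hbU, hnon, hab⟩ := hUc a haF
    obtain ⟨z, hz1, hz2⟩ := hnon
    refine Set.mem_iUnion₂.mpr ⟨b, hUfin.mem_toFinset.mpr hbU, ?_⟩
    refine zCube_mono _ ?_ (zCube_subset hz1 hz2 (openCube_subset _ _ hya))
    have := hu b; linarith
  calc s * volume K ≤ s * ∑ b ∈ hUfin.toFinset, volume (zCube (cc b) (5 * uu b)) :=
        mul_le_mul_right (le_trans (measure_mono hcov) (measure_biUnion_finset_le _ _)) s
    _ = ∑ b ∈ hUfin.toFinset, s * ENNReal.ofReal ((5 * uu b) ^ n) := by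
        rw [Finset.mul_sum]
        refine Finset.sum_congr rfl fun b _ => by
          rw [volume_zCube _ (by linarith [hu b] : (0:ℝ) ≤ 5 * uu b)]
    _ ≤ ∑ b ∈ hUfin.toFinset, (5:ℝ≥0∞)^n * ∫⁻ y in zCube (cc b) (uu b), g y := by
        refine Finset.sum_le_sum fun b _ => ?_
        have h5 : ENNReal.ofReal ((5 * uu b) ^ n) =
            (5:ℝ≥0∞)^n * ENNReal.ofReal ((uu b) ^ n) := by
          rw [mul_pow, ENNReal.ofReal_mul (by positivity : (0:ℝ) ≤ 5^n)]
          congr 1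
          rw [ENNReal.ofReal_pow (by norm_num : (0:ℝ) ≤ 5)]
          norm_num
        rw [h5, ← mul_assoc, mul_comm s ((5:ℝ≥0∞)^n), mul_assoc]
        exact mul_le_mul_right (mul_ofReal_le_of_lt_avg (hu b) (havg b)) _
    _ = (5:ℝ≥0∞)^n * ∑ b ∈ hUfin.toFinset, ∫⁻ y in zCube (cc b) (uu b), g y := by
        rw [Finset.mul_sum]
    _ ≤ (5:ℝ≥0∞)^n * ∫⁻ y, g y := by
        refine mul_le_mul_right ?_ _
        rw [← lintegral_biUnion_finset ?_ (fun b _ => measurableSet_zCube _ _) g]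
        · exact lintegral_mono' Measure.restrict_le_self le_rfl
        · intro a ha b hb hab
          exact hUd (hUfin.mem_toFinset.mp ha) (hUfin.mem_toFinset.mp hb) hab


lemma measure_setOf_ofReal_lt (G₀ : ℝ≥0∞) :
    volume ({t : ℝ | ENNReal.ofReal t < G₀} ∩ Ioi 0) = G₀ := by
  by_cases hG : G₀ = ⊤
  · have : {t : ℝ | ENNReal.ofReal t < G₀} ∩ Ioi 0 = Ioi 0 := by
      ext t; simp [hG, ENNReal.ofReal_lt_top]
    rw [this, Real.volume_Ioi, hG]
  · have : {t : ℝ | ENNReal.ofReal t < G₀} ∩ Ioi 0 = Ioo 0 G₀.toReal := by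
      ext t
      simp only [Set.mem_inter_iff, Set.mem_setOf_eq, Set.mem_Ioi, Set.mem_Ioo]
      constructor
      · rintro ⟨h1, h2⟩
        exact ⟨h2, (ENNReal.ofReal_lt_iff_lt_toReal (le_of_lt h2) hG).mp h1⟩
      · rintro ⟨h1, h2⟩
        exact ⟨(ENNReal.ofReal_lt_iff_lt_toReal (le_of_lt h1) hG).mpr h2, h1⟩
    rw [this, Real.volume_Ioo, sub_zero, ENNReal.ofReal_toReal hG]

lemma lintegral_layer {X : Type*} [MeasurableSpace X] (μ : Measure X) [SFinite μ]
    (G : X → ℝ≥0∞) (hG : Measurable G) :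
    ∫⁻ y, G y ∂μ = ∫⁻ t in Ioi (0:ℝ), μ {y | ENNReal.ofReal t < G y} := by
  have hset : MeasurableSet {p : ℝ × X | ENNReal.ofReal p.1 < G p.2} :=
    measurableSet_lt (ENNReal.measurable_ofReal.comp measurable_fst) (hG.comp measurable_snd)
  have hswap := lintegral_lintegral_swap (μ := volume.restrict (Ioi (0:ℝ))) (ν := μ)
    (f := fun t y => {p : ℝ × X | ENNReal.ofReal p.1 < G p.2}.indicator
      (fun _ => (1:ℝ≥0∞)) (t, y))
    ((measurable_const.indicator hset).aemeasurable)
  calc ∫⁻ y, G y ∂μ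
      = ∫⁻ y, volume ({t : ℝ | ENNReal.ofReal t < G y} ∩ Ioi 0) ∂μ := by
        refine lintegral_congr fun y => (measure_setOf_ofReal_lt (G y)).symm
    _ = ∫⁻ y, (∫⁻ t in Ioi (0:ℝ), {p : ℝ × X | ENNReal.ofReal p.1 < G p.2}.indicator
          (fun _ => (1:ℝ≥0∞)) (t, y)) ∂μ := by
        refine lintegral_congr fun y => ?_
        have hsm : MeasurableSet {t : ℝ | ENNReal.ofReal t < G y} :=
          measurableSet_lt ENNReal.measurable_ofReal measurable_const
        have heq : (fun t : ℝ => {p : ℝ × X | ENNReal.ofReal p.1 < G p.2}.indicator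
            (fun _ => (1:ℝ≥0∞)) (t, y)) = fun t : ℝ =>
            {t : ℝ | ENNReal.ofReal t < G y}.indicator (fun _ => (1:ℝ≥0∞)) t := by
          ext t
          by_cases h : ENNReal.ofReal t < G y <;> simp [Set.indicator, h]
        rw [heq, lintegral_indicator hsm, setLIntegral_one, Measure.restrict_apply hsm]
    _ = ∫⁻ t in Ioi (0:ℝ), (∫⁻ y, {p : ℝ × X | ENNReal.ofReal p.1 < G p.2}.indicator
          (fun _ => (1:ℝ≥0∞)) (t, y) ∂μ) := hswap.symm
    _ = ∫⁻ t in Ioi (0:ℝ), μ {y | ENNReal.ofReal t < G y} := by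
        refine lintegral_congr fun t => ?_
        have hsm : MeasurableSet {y : X | ENNReal.ofReal t < G y} :=
          measurableSet_lt measurable_const hG
        have heq : (fun y : X => {p : ℝ × X | ENNReal.ofReal p.1 < G p.2}.indicator
            (fun _ => (1:ℝ≥0∞)) (t, y)) = fun y : X =>
            {y : X | ENNReal.ofReal t < G y}.indicator (fun _ => (1:ℝ≥0∞)) y := by
          ext y
          by_cases h : ENNReal.ofReal t < G y <;> simp [Set.indicator, h]
        rw [heq, lintegral_indicator hsm, setLIntegral_one]

lemma lintegral_inv_half_Ioo {a b : ℝ} (ha : 0 < a) (hb : 0 ≤ b) :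
    ∫⁻ t in Ioo a b, (ENNReal.ofReal (t/2))⁻¹ = ENNReal.ofReal (2 * Real.log (b / a)) := by
  rcases le_or_gt b a with hba | hab
  · rw [Set.Ioo_eq_empty (fun h => absurd hba (not_le.mpr h))]
    simp only [Measure.restrict_empty, lintegral_zero_measure]
    symm
    rw [ENNReal.ofReal_eq_zero]
    have h1 : b / a ≤ 1 := (div_le_one ha).mpr hba
    have := Real.log_nonpos (div_nonneg hb (le_of_lt ha)) h1
    linarith
  · have hcong : ∀ t ∈ Ioo a b, (ENNReal.ofReal (t/2))⁻¹ = ENNReal.ofReal (2/t) := by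
      intro t ht
      rw [← ENNReal.ofReal_inv_of_pos (by linarith [ht.1] : (0:ℝ) < t/2)]
      congr 1
      field_simp
    rw [setLIntegral_congr_fun measurableSet_Ioo hcong]
    have hint : IntegrableOn (fun t : ℝ => 2/t) (Ioo a b) := by
      refine IntegrableOn.mono_set ?_ Set.Ioo_subset_Icc_self
      refine ContinuousOn.integrableOn_Icc ?_
      exact continuousOn_const.div continuousOn_id fun t ht => by
        have := ht.1; intro h; rw [h] at this; linarith
    have hnn : 0 ≤ᵐ[volume.restrict (Ioo a b)] fun t : ℝ => 2/t := by
      refine (ae_restrict_iff' measurableSet_Ioo).mpr (Filter.Eventually.of_forall ?_)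
      intro t ht
      have : 0 < t := lt_trans ha ht.1
      positivity
    rw [← ofReal_integral_eq_lintegral_ofReal hint hnn]
    congr 1
    have h1 : ∫ t in Ioo a b, 2/t = ∫ t in Ioc a b, 2/t := by
      exact (MeasureTheory.integral_Ioc_eq_integral_Ioo).symm
    rw [h1, ← intervalIntegral.integral_of_le (le_of_lt hab)]
    have h2 : (fun t : ℝ => 2/t) = fun t : ℝ => 2 * (1/t) := by ext t; ring
    calc ∫ t in a..b, 2/t = ∫ t in a..b, 2 * (1/t) := by rw [h2]
    _ = 2 * ∫ t in a..b, 1/t := intervalIntegral.integral_const_mul 2 _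
    _ = 2 * Real.log (b / a) := by
        rw [integral_one_div]
        intro h0
        rcases Set.mem_uIcc.mp h0 with ⟨h1', h2'⟩ | ⟨h1', h2'⟩ <;> linarith

lemma zygFnE_zero : zygFnE 0 = 0 := by simp [zygFnE]

lemma zygFnE_top : zygFnE ⊤ = ⊤ := by
  have : (1 : ℝ≥0∞) + ENNReal.ofReal (logPlus (⊤ : ℝ≥0∞).toReal) ≠ 0 := by
    intro hc
    rw [add_eq_zero] at hc
    exact one_ne_zero hc.1
  simp [zygFnE, ENNReal.top_mul this]

lemma measurable_zygFnE : Measurable zygFnE := by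
  unfold zygFnE logPlus
  exact measurable_id.mul ((measurable_const.add (ENNReal.measurable_ofReal.comp
    ((Real.measurable_log.comp ENNReal.measurable_toReal).max measurable_const))))

lemma self_le_zygFnE (u : ℝ≥0∞) : u ≤ zygFnE u := by
  unfold zygFnE
  calc u = u * 1 := (mul_one u).symm
  _ ≤ u * (1 + ENNReal.ofReal (logPlus u.toReal)) := mul_le_mul_right le_self_add u

lemma stein_beta (g : Rn n → ℝ≥0∞) (hg : Measurable g) (c' : Rn n) {H β : ℝ}
    (hH : 0 < H) (hβ : 0 < β)
    (hadm : ∫⁻ y in zCube c' H, zygFnE (g y / ENNReal.ofReal β) ≤ ENNReal.ofReal (H ^ n)) :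
    ∫⁻ y in zCube c' H, maxE ((zCube c' H).indicator g) y
      ≤ (2 + 2 * 5 ^ n : ℝ≥0∞) * (ENNReal.ofReal β * ENNReal.ofReal (H ^ n)) := by
  set Q := zCube c' H with hQdef
  have hQm : MeasurableSet Q := measurableSet_zCube c' H
  set g' := Q.indicator g with hg'def
  have hg' : Measurable g' := hg.indicator hQm
  set G := maxE g' with hGdef
  have hGm : Measurable G := measurable_maxE g'
  have hβ0 : ENNReal.ofReal β ≠ 0 := by simp [ENNReal.ofReal_eq_zero, not_le, hβ]
  -- a.e. finiteness of g'
  have hzfin : ∀ᵐ y ∂(volume.restrict Q), zygFnE (g y / ENNReal.ofReal β) < ⊤ :=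
    ae_lt_top (measurable_zygFnE.comp (hg.div_const _))
      (lt_of_le_of_lt hadm ENNReal.ofReal_lt_top).ne
  have hfinQ : ∀ᵐ y ∂(volume.restrict Q), g y ≠ ⊤ := by
    refine hzfin.mono fun y hy hgy => ?_
    rw [hgy, ENNReal.top_div_of_ne_top ENNReal.ofReal_ne_top, zygFnE_top] at hy
    exact absurd hy (lt_irrefl _)
  have hfin : ∀ᵐ y, g' y ≠ ⊤ := by
    have h1 := (ae_restrict_iff' hQm).mp hfinQ
    refine h1.mono fun y hy => ?_
    by_cases hyQ : y ∈ Q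
    · rw [hg'def, Set.indicator_of_mem hyQ]; exact hy hyQ
    · rw [hg'def, Set.indicator_of_notMem hyQ]; simp
  -- layer cake
  rw [show ∫⁻ y in zCube c' H, maxE ((zCube c' H).indicator g) y = ∫⁻ y, G y ∂(volume.restrict Q)
    from rfl]
  rw [lintegral_layer _ G hGm]
  have hsplit : Ioi (0:ℝ) = Ioc 0 (2*β) ∪ Ioi (2*β) := (Ioc_union_Ioi_eq_Ioi (by linarith)).symm
  rw [hsplit, lintegral_union measurableSet_Ioi (Ioc_disjoint_Ioi le_rfl)]
  have hvolQ : volume Q = ENNReal.ofReal (H ^ n) := volume_zCube c' (le_of_lt hH)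
  -- Term 1
  have hT1 : ∫⁻ t in Ioc 0 (2*β), (volume.restrict Q) {y | ENNReal.ofReal t < G y}
      ≤ 2 * (ENNReal.ofReal β * ENNReal.ofReal (H ^ n)) := by
    have hb : ∀ t : ℝ, (volume.restrict Q) {y | ENNReal.ofReal t < G y}
        ≤ ENNReal.ofReal (H ^ n) := fun t => by
      calc (volume.restrict Q) {y | ENNReal.ofReal t < G y}
          ≤ (volume.restrict Q) univ := measure_mono (subset_univ _)
        _ = volume Q := by rw [Measure.restrict_apply_univ]
        _ = ENNReal.ofReal (H ^ n) := hvolQ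
    calc ∫⁻ t in Ioc 0 (2*β), (volume.restrict Q) {y | ENNReal.ofReal t < G y}
        ≤ ∫⁻ _ in Ioc 0 (2*β), ENNReal.ofReal (H ^ n) := lintegral_mono fun t => hb t
      _ = ENNReal.ofReal (H ^ n) * volume (Ioc 0 (2*β)) := setLIntegral_const _ _
      _ = 2 * (ENNReal.ofReal β * ENNReal.ofReal (H ^ n)) := by
          rw [Real.volume_Ioc, sub_zero,
            show ENNReal.ofReal (2*β) = 2 * ENNReal.ofReal β by
              rw [ENNReal.ofReal_mul (by norm_num : (0:ℝ) ≤ 2)]; norm_num]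
          ring
  -- Term 2
  set g2 : ℝ → Rn n → ℝ≥0∞ := fun t y => if ENNReal.ofReal (t/2) < g' y then g' y else 0
    with hg2def
  have hclaim1 : ∀ t : ℝ, 0 ≤ t → ∀ x : Rn n, G x ≤ maxE (g2 t) x + ENNReal.ofReal (t/2) := by
    intro t ht x
    refine maxE_le fun c₀ u hu hx => ?_
    have hle : ∀ y, g' y ≤ g2 t y + ENNReal.ofReal (t/2) := fun y => by
      by_cases hc : ENNReal.ofReal (t/2) < g' y
      · simp only [hg2def, hc, if_true]; exact self_le_add_right _ _
      · simp only [hg2def, hc, if_false]; rw [zero_add]; exact not_lt.mp hc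
    have hd0 : ENNReal.ofReal (u ^ n) ≠ 0 := by
      simp [ENNReal.ofReal_eq_zero, not_le, pow_pos hu]
    calc (ENNReal.ofReal (u ^ n))⁻¹ * ∫⁻ y in zCube c₀ u, g' y
        ≤ (ENNReal.ofReal (u ^ n))⁻¹ * ∫⁻ y in zCube c₀ u, (g2 t y + ENNReal.ofReal (t/2)) :=
          mul_le_mul_right (lintegral_mono fun y => hle y) _
      _ = (ENNReal.ofReal (u ^ n))⁻¹ * ((∫⁻ y in zCube c₀ u, g2 t y)
            + ENNReal.ofReal (t/2) * ENNReal.ofReal (u ^ n)) := by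
          rw [lintegral_add_right' _ aemeasurable_const, setLIntegral_const,
            volume_zCube c₀ (le_of_lt hu)]
      _ = (ENNReal.ofReal (u ^ n))⁻¹ * (∫⁻ y in zCube c₀ u, g2 t y)
            + (ENNReal.ofReal (u ^ n))⁻¹ * (ENNReal.ofReal (t/2) * ENNReal.ofReal (u ^ n)) := by
          rw [mul_add]
      _ ≤ maxE (g2 t) x + ENNReal.ofReal (t/2) := by
          refine add_le_add (le_maxE hu hx) ?_
          rw [mul_comm (ENNReal.ofReal (t/2)) _, ← mul_assoc,
            ENNReal.inv_mul_cancel hd0 ENNReal.ofReal_ne_top, one_mul]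
  have hclaim2 : ∀ t : ℝ, 0 < t → {y : Rn n | ENNReal.ofReal t < G y}
      ⊆ {y : Rn n | ENNReal.ofReal (t/2) < maxE (g2 t) y} := by
    intro t ht y hy
    simp only [Set.mem_setOf_eq] at hy ⊢
    by_contra hnot
    have h1 : G y ≤ ENNReal.ofReal (t/2) + ENNReal.ofReal (t/2) :=
      le_trans (hclaim1 t (le_of_lt ht) y) (add_le_add_left (not_lt.mp hnot) _)
    rw [← ENNReal.ofReal_add (by linarith) (by linarith)] at h1
    have : t/2 + t/2 = t := by ring
    rw [this] at h1
    exact absurd hy (not_lt.mpr h1)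
  have h5top : ((5:ℝ≥0∞)^n) ≠ ⊤ := ENNReal.pow_ne_top (by norm_num)
  have hsetp : MeasurableSet {p : ℝ × Rn n | ENNReal.ofReal (p.1/2) < g' p.2} :=
    measurableSet_lt ((ENNReal.measurable_ofReal).comp ((measurable_fst).div_const 2))
      (hg'.comp measurable_snd)
  have hprodm : Measurable fun p : ℝ × Rn n =>
      (ENNReal.ofReal (p.1/2))⁻¹ * (if ENNReal.ofReal (p.1/2) < g' p.2 then g' p.2 else 0) :=
    (((ENNReal.measurable_ofReal).comp ((measurable_fst).div_const 2)).inv).mul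
      (Measurable.ite hsetp (hg'.comp measurable_snd) measurable_const)
  have hT2 : ∫⁻ t in Ioi (2*β), (volume.restrict Q) {y | ENNReal.ofReal t < G y}
      ≤ (5:ℝ≥0∞)^n * (2 * (ENNReal.ofReal β * ENNReal.ofReal (H ^ n))) := by
    have hstep1 : ∀ t ∈ Ioi (2*β), (volume.restrict Q) {y | ENNReal.ofReal t < G y}
        ≤ (5:ℝ≥0∞)^n * ((ENNReal.ofReal (t/2))⁻¹ * ∫⁻ y, g2 t y) := by
      intro t ht
      rw [Set.mem_Ioi] at ht
      have ht0 : 0 < t := by linarith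
      have hd0 : ENNReal.ofReal (t/2) ≠ 0 := by
        simp only [ne_eq, ENNReal.ofReal_eq_zero, not_le]; linarith
      have hw := weak11 (g2 t) (ENNReal.ofReal (t/2))
      calc (volume.restrict Q) {y | ENNReal.ofReal t < G y}
          ≤ volume {y | ENNReal.ofReal t < G y} := Measure.restrict_apply_le _ _
        _ ≤ volume {y | ENNReal.ofReal (t/2) < maxE (g2 t) y} := measure_mono (hclaim2 t ht0)
        _ = (ENNReal.ofReal (t/2))⁻¹ * (ENNReal.ofReal (t/2)
              * volume {y | ENNReal.ofReal (t/2) < maxE (g2 t) y}) := by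
            rw [← mul_assoc, ENNReal.inv_mul_cancel hd0 ENNReal.ofReal_ne_top, one_mul]
        _ ≤ (ENNReal.ofReal (t/2))⁻¹ * ((5:ℝ≥0∞)^n * ∫⁻ y, g2 t y) := mul_le_mul_right hw _
        _ = (5:ℝ≥0∞)^n * ((ENNReal.ofReal (t/2))⁻¹ * ∫⁻ y, g2 t y) := by
            rw [mul_left_comm]
    calc ∫⁻ t in Ioi (2*β), (volume.restrict Q) {y | ENNReal.ofReal t < G y}
        ≤ ∫⁻ t in Ioi (2*β), (5:ℝ≥0∞)^n * ((ENNReal.ofReal (t/2))⁻¹ * ∫⁻ y, g2 t y) :=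
          setLIntegral_mono' measurableSet_Ioi hstep1
      _ = (5:ℝ≥0∞)^n * ∫⁻ t in Ioi (2*β), (ENNReal.ofReal (t/2))⁻¹ * ∫⁻ y, g2 t y :=
          lintegral_const_mul' _ _ h5top
      _ = (5:ℝ≥0∞)^n * ∫⁻ y, (∫⁻ t in Ioi (2*β), (ENNReal.ofReal (t/2))⁻¹ * g2 t y) := by
          congr 1
          have hpull : ∀ t ∈ Ioi (2*β), (ENNReal.ofReal (t/2))⁻¹ * ∫⁻ y, g2 t y
              = ∫⁻ y, (ENNReal.ofReal (t/2))⁻¹ * g2 t y := by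
            intro t ht
            rw [Set.mem_Ioi] at ht
            have hd0 : ENNReal.ofReal (t/2) ≠ 0 := by
              simp only [ne_eq, ENNReal.ofReal_eq_zero, not_le]; linarith
            exact (lintegral_const_mul' _ _ (by simpa using hd0)).symm
          rw [setLIntegral_congr_fun measurableSet_Ioi hpull]
          exact lintegral_lintegral_swap hprodm.aemeasurable
      _ ≤ (5:ℝ≥0∞)^n * ∫⁻ y, 2 * (ENNReal.ofReal β * zygFnE (g' y / ENNReal.ofReal β)) := by
          refine mul_le_mul_right (lintegral_mono_ae ?_) _
          refine hfin.mono fun y hy => ?_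
          by_cases hcase : g' y ≤ ENNReal.ofReal β
          · have hz : ∀ t ∈ Ioi (2*β), (ENNReal.ofReal (t/2))⁻¹ * g2 t y = 0 := by
              intro t ht
              rw [Set.mem_Ioi] at ht
              have hcond : ¬ (ENNReal.ofReal (t/2) < g' y) := by
                refine not_lt.mpr (le_trans hcase (ENNReal.ofReal_le_ofReal (by linarith)))
              simp [hg2def, hcond]
            rw [setLIntegral_congr_fun measurableSet_Ioi hz]
            simp
          · push_neg at hcase
            set G₀ := (g' y).toReal with hG₀
            have hG₀β : β < G₀ := by
              have := (ENNReal.ofReal_lt_iff_lt_toReal (le_of_lt hβ) hy).mp hcase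
              exact this
            have hG₀0 : 0 < G₀ := lt_trans hβ hG₀β
            have heval : ∀ t ∈ Ioi (2*β), (ENNReal.ofReal (t/2))⁻¹ * g2 t y
                = (Iio (2*G₀)).indicator (fun t => (ENNReal.ofReal (t/2))⁻¹ * g' y) t := by
              intro t ht
              rw [Set.mem_Ioi] at ht
              have ht0 : 0 < t := by linarith
              by_cases hlt : t < 2*G₀
              · have hcond : ENNReal.ofReal (t/2) < g' y := by
                  rw [ENNReal.ofReal_lt_iff_lt_toReal (by linarith) hy]
                  linarith
                simp only [hg2def, hcond, if_true,
                  Set.indicator_of_mem (Set.mem_Iio.mpr hlt)]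
              · have hcond : ¬ (ENNReal.ofReal (t/2) < g' y) := by
                  rw [ENNReal.ofReal_lt_iff_lt_toReal (by linarith) hy]
                  push_neg at hlt ⊢
                  linarith
                rw [Set.indicator_of_notMem (fun hmem => hlt (Set.mem_Iio.mp hmem))]
                simp [hg2def, hcond]
            rw [setLIntegral_congr_fun measurableSet_Ioi heval]
            rw [lintegral_indicator measurableSet_Iio,
              Measure.restrict_restrict measurableSet_Iio, Set.Iio_inter_Ioi]
            rw [lintegral_mul_const' _ _ hy, lintegral_inv_half_Ioo (by linarith) (by linarith)]
            have hdiv : 2*G₀/(2*β) = G₀/β := mul_div_mul_left G₀ β two_ne_zero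
            rw [hdiv, ENNReal.ofReal_mul (by norm_num : (0:ℝ) ≤ 2)]
            rw [show ENNReal.ofReal (2:ℝ) = 2 by norm_num, mul_assoc]
            refine mul_le_mul_right ?_ 2
            have hu : ENNReal.ofReal β * (g' y / ENNReal.ofReal β) = g' y :=
              ENNReal.mul_div_cancel hβ0 ENNReal.ofReal_ne_top
            have hut : (g' y / ENNReal.ofReal β).toReal = G₀ / β := by
              rw [ENNReal.toReal_div, ENNReal.toReal_ofReal (le_of_lt hβ)]
            calc ENNReal.ofReal (Real.log (G₀/β)) * g' y
                ≤ ENNReal.ofReal (logPlus (G₀/β)) * g' y :=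
                  mul_le_mul_left (ENNReal.ofReal_le_ofReal (le_max_left _ _)) _
              _ ≤ (1 + ENNReal.ofReal (logPlus (G₀/β))) * g' y :=
                  mul_le_mul_left le_add_self _
              _ = ENNReal.ofReal β * zygFnE (g' y / ENNReal.ofReal β) := by
                  rw [zygFnE, hut, ← mul_assoc, hu, mul_comm]
      _ = (5:ℝ≥0∞)^n * (2 * (ENNReal.ofReal β * ∫⁻ y, zygFnE (g' y / ENNReal.ofReal β))) := by
          rw [lintegral_const_mul' 2 _ (by norm_num),
            lintegral_const_mul' (ENNReal.ofReal β) _ ENNReal.ofReal_ne_top]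
      _ ≤ (5:ℝ≥0∞)^n * (2 * (ENNReal.ofReal β * ENNReal.ofReal (H ^ n))) := by
          have hind : (fun y => zygFnE (g' y / ENNReal.ofReal β))
              = Q.indicator (fun y => zygFnE (g y / ENNReal.ofReal β)) := by
            ext y
            by_cases hyQ : y ∈ Q
            · rw [Set.indicator_of_mem hyQ, hg'def, Set.indicator_of_mem hyQ]
            · rw [Set.indicator_of_notMem hyQ, hg'def, Set.indicator_of_notMem hyQ,
                ENNReal.zero_div, zygFnE_zero]
          have : ∫⁻ y, zygFnE (g' y / ENNReal.ofReal β) ≤ ENNReal.ofReal (H ^ n) := by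
            rw [hind, lintegral_indicator hQm]
            exact hadm
          gcongr
  calc (∫⁻ t in Ioc 0 (2*β), (volume.restrict Q) {y | ENNReal.ofReal t < G y})
        + ∫⁻ t in Ioi (2*β), (volume.restrict Q) {y | ENNReal.ofReal t < G y}
      ≤ 2 * (ENNReal.ofReal β * ENNReal.ofReal (H ^ n))
        + (5:ℝ≥0∞)^n * (2 * (ENNReal.ofReal β * ENNReal.ofReal (H ^ n))) := add_le_add hT1 hT2
    _ = (2 + 2 * 5 ^ n : ℝ≥0∞) * (ENNReal.ofReal β * ENNReal.ofReal (H ^ n)) := by ring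

lemma ofReal_pow_ne_zero {H : ℝ} (hH : 0 < H) : ENNReal.ofReal (H ^ n) ≠ 0 := by
  simp [ENNReal.ofReal_eq_zero, not_le, pow_pos hH]

lemma avg_le_zygAvgE (g : Rn n → ℝ≥0∞) (c : Rn n) {H : ℝ} (hH : 0 < H) :
    (ENNReal.ofReal (H ^ n))⁻¹ * ∫⁻ y in zCube c H, g y ≤ zygAvgE g c H := by
  refine le_sInf fun a ha => ?_
  obtain ⟨α, hα, rfl, hcond⟩ := ha
  have hα0 : ENNReal.ofReal α ≠ 0 := by simp [ENNReal.ofReal_eq_zero, not_le, hα]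
  calc (ENNReal.ofReal (H ^ n))⁻¹ * ∫⁻ y in zCube c H, g y
      = (ENNReal.ofReal (H ^ n))⁻¹ *
          ∫⁻ y in zCube c H, ENNReal.ofReal α * (g y / ENNReal.ofReal α) := by
        congr 1
        refine lintegral_congr fun y => ?_
        rw [ENNReal.mul_div_cancel hα0 ENNReal.ofReal_ne_top]
    _ = ENNReal.ofReal α * ((ENNReal.ofReal (H ^ n))⁻¹
          * ∫⁻ y in zCube c H, g y / ENNReal.ofReal α) := by
        rw [lintegral_const_mul' _ _ ENNReal.ofReal_ne_top, mul_left_comm]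
    _ ≤ ENNReal.ofReal α * ((ENNReal.ofReal (H ^ n))⁻¹
          * ∫⁻ y in zCube c H, zygFnE (g y / ENNReal.ofReal α)) := by
        refine mul_le_mul_right (mul_le_mul_right (lintegral_mono fun y =>
          self_le_zygFnE _) _) _
    _ ≤ ENNReal.ofReal α * 1 := mul_le_mul_right hcond _
    _ = ENNReal.ofReal α := mul_one _

lemma stein (g : Rn n → ℝ≥0∞) (hg : Measurable g) (c' : Rn n) {H : ℝ} (hH : 0 < H) :
    ∫⁻ y in zCube c' H, maxE ((zCube c' H).indicator g) y
      ≤ (2 + 2 * 5 ^ n : ℝ≥0∞) * ENNReal.ofReal (H ^ n) * zygAvgE g c' H := by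
  set K : ℝ≥0∞ := (2 + 2 * 5 ^ n : ℝ≥0∞) * ENNReal.ofReal (H ^ n) with hKdef
  have hK0 : K ≠ 0 := by
    refine mul_ne_zero ?_ (ofReal_pow_ne_zero hH)
    intro hc; rw [add_eq_zero] at hc; norm_num at hc
  have hKtop : K ≠ ⊤ := by
    refine ENNReal.mul_ne_top ?_ ENNReal.ofReal_ne_top
    refine ENNReal.add_ne_top.mpr ⟨by norm_num, ENNReal.mul_ne_top (by norm_num)
      (ENNReal.pow_ne_top (by norm_num))⟩
  have hall : ∀ a ∈ {a : ℝ≥0∞ | ∃ α : ℝ, 0 < α ∧ a = ENNReal.ofReal α ∧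
      (ENNReal.ofReal (H ^ n))⁻¹ * ∫⁻ y in zCube c' H, zygFnE (g y / ENNReal.ofReal α) ≤ 1},
      (∫⁻ y in zCube c' H, maxE ((zCube c' H).indicator g) y) ≤ K * a := by
    rintro a ⟨α, hα, rfl, hcond⟩
    have hd0 := ofReal_pow_ne_zero (n := n) hH
    have hadm : ∫⁻ y in zCube c' H, zygFnE (g y / ENNReal.ofReal α)
        ≤ ENNReal.ofReal (H ^ n) := by
      have h1 : ENNReal.ofReal (H ^ n) * ((ENNReal.ofReal (H ^ n))⁻¹ *
          ∫⁻ y in zCube c' H, zygFnE (g y / ENNReal.ofReal α))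
          ≤ ENNReal.ofReal (H ^ n) * 1 := mul_le_mul_right hcond _
      rwa [← mul_assoc, ENNReal.mul_inv_cancel hd0 ENNReal.ofReal_ne_top, one_mul,
        mul_one] at h1
    calc ∫⁻ y in zCube c' H, maxE ((zCube c' H).indicator g) y
        ≤ (2 + 2 * 5 ^ n : ℝ≥0∞) * (ENNReal.ofReal α * ENNReal.ofReal (H ^ n)) :=
          stein_beta g hg c' hH hα hadm
      _ = K * ENNReal.ofReal α := by rw [hKdef]; ring
  -- conclude via division
  have hdiv : (∫⁻ y in zCube c' H, maxE ((zCube c' H).indicator g) y) / K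
      ≤ zygAvgE g c' H := by
    refine le_sInf fun a ha => ?_
    rw [ENNReal.div_le_iff_le_mul (Or.inl hK0) (Or.inl hKtop), mul_comm]
    exact hall a ha
  calc ∫⁻ y in zCube c' H, maxE ((zCube c' H).indicator g) y
      = K * ((∫⁻ y in zCube c' H, maxE ((zCube c' H).indicator g) y) / K) := by
        rw [ENNReal.mul_div_cancel hK0 hKtop]
    _ ≤ K * zygAvgE g c' H := mul_le_mul_right hdiv _

lemma P1 (g : Rn n → ℝ≥0∞) (c₀ : Rn n) {h : ℝ} (hh : 0 < h) {x : Rn n}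
    (hx : x ∈ zCube c₀ h) :
    maxE g x ≤ maxE ((zCube c₀ (3*h)).indicator g) x
      + (3:ℝ≥0∞)^n * ⨆ (H : ℝ) (_ : h ≤ H),
          (ENNReal.ofReal (H^n))⁻¹ * ∫⁻ y in zCube c₀ H, g y := by
  refine maxE_le fun c u hu hxu => ?_
  rcases le_or_gt u h with huh | huh
  · have hsub : zCube c u ⊆ zCube c₀ (3*h) :=
      (zCube_subset hxu hx).trans (zCube_mono _ (by linarith))
    have heq : ∫⁻ y in zCube c u, g y
        = ∫⁻ y in zCube c u, (zCube c₀ (3*h)).indicator g y := by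
      refine setLIntegral_congr_fun (measurableSet_zCube c u)
        (fun y hy => (Set.indicator_of_mem (hsub hy) g).symm)
    rw [heq]
    exact le_trans (le_maxE hu hxu) le_self_add
  · have hsub : zCube c u ⊆ zCube c₀ (3*u) :=
      (zCube_subset hxu hx).trans (zCube_mono _ (by linarith))
    refine le_trans ?_ le_add_self
    have h3u : h ≤ 3*u := by linarith
    have hscal : (ENNReal.ofReal (u^n))⁻¹ = (3:ℝ≥0∞)^n * (ENNReal.ofReal ((3*u)^n))⁻¹ := by
      rw [show ((3*u):ℝ)^n = 3^n * u^n by ring,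
        ENNReal.ofReal_mul (by positivity : (0:ℝ) ≤ 3^n),
        show ENNReal.ofReal ((3:ℝ)^n) = (3:ℝ≥0∞)^n by
          rw [ENNReal.ofReal_pow (by norm_num : (0:ℝ) ≤ 3)]; norm_num,
        ENNReal.mul_inv (Or.inl (by positivity)) (Or.inl (ENNReal.pow_ne_top (by norm_num))),
        ← mul_assoc, ENNReal.mul_inv_cancel (by positivity)
          (ENNReal.pow_ne_top (by norm_num)), one_mul]
    calc (ENNReal.ofReal (u^n))⁻¹ * ∫⁻ y in zCube c u, g y
        ≤ (ENNReal.ofReal (u^n))⁻¹ * ∫⁻ y in zCube c₀ (3*u), g y :=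
          mul_le_mul_right (lintegral_mono_set hsub) _
      _ = (3:ℝ≥0∞)^n * ((ENNReal.ofReal ((3*u)^n))⁻¹ * ∫⁻ y in zCube c₀ (3*u), g y) := by
          rw [hscal, mul_assoc]
      _ ≤ (3:ℝ≥0∞)^n * ⨆ (H : ℝ) (_ : h ≤ H),
            (ENNReal.ofReal (H^n))⁻¹ * ∫⁻ y in zCube c₀ H, g y := by
          refine mul_le_mul_right ?_ _
          refine le_iSup_of_le (3*u) ?_
          exact le_iSup_of_le h3u le_rfl

lemma zygAvgE_congr_ae {g g' : Rn n → ℝ≥0∞} (h : g =ᵐ[volume] g') (c : Rn n) (H : ℝ) :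
    zygAvgE g c H = zygAvgE g' c H := by
  have hl : ∀ α : ℝ, ∫⁻ y in zCube c H, zygFnE (g y / ENNReal.ofReal α)
      = ∫⁻ y in zCube c H, zygFnE (g' y / ENNReal.ofReal α) := fun α =>
    lintegral_congr_ae (ae_restrict_of_ae (h.mono fun y hy => by simp only [hy]))
  unfold zygAvgE
  congr 1
  ext a
  simp only [Set.mem_setOf_eq]
  constructor
  · rintro ⟨α, h1, h2, h3⟩; exact ⟨α, h1, h2, by rw [← hl α]; exact h3⟩
  · rintro ⟨α, h1, h2, h3⟩; exact ⟨α, h1, h2, by rw [hl α]; exact h3⟩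

lemma zygMorreyE_congr_ae (lam : ℝ) {g g' : Rn n → ℝ≥0∞} (h : g =ᵐ[volume] g') :
    zygMorreyE lam g = zygMorreyE lam g' := by
  unfold zygMorreyE
  exact iSup_congr fun c => iSup_congr fun H => iSup_congr fun _ => by
    rw [zygAvgE_congr_ae h c H]


end S16

open S16

/-- Let `0 < λ < n`. The iterated maximal operator `M² = M ∘ M` is bounded
from the Zygmund–Morrey space `M_{L(1+log⁺L),λ}(ℝⁿ)` to the weak Zygmund–Morrey space
`WM_{L(1+log⁺L),λ}(ℝⁿ)`. -/
theorem stmt16 (n : ℕ) (lam : ℝ) (hlam0 : 0 < lam) (hlamn : lam < (n : ℝ)) :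
    ∃ c : ℝ, 0 < c ∧ ∀ f : Rn n → ℝ, MeasureTheory.LocallyIntegrable f volume →
      weakZygMorreyE lam (maxE (HLM f)) ≤ ENNReal.ofReal c * zygMorrey lam f := by
  classical
  set C2 : ℝ≥0∞ := (2 + 2*5^n : ℝ≥0∞) with hC2def
  set C3 : ℝ≥0∞ := C2 * 3^n + 3^n with hC3def
  set C3r : ℝ := 3^n * (3 + 2*5^n) with hC3rdef
  set K : ℝ := 2 * 15^n * C3r with hKdef
  have hC3r : 0 < C3r := by positivity
  have hK : 0 < K := by positivity
  have hC3eq : C3 = ENNReal.ofReal C3r := by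
    rw [hC3def, hC2def, hC3rdef]
    rw [ENNReal.ofReal_mul (by positivity : (0:ℝ) ≤ 3^n)]
    rw [ENNReal.ofReal_pow (by norm_num : (0:ℝ) ≤ 3)]
    rw [ENNReal.ofReal_add (by norm_num) (by positivity : (0:ℝ) ≤ 2*5^n)]
    rw [ENNReal.ofReal_mul (by norm_num : (0:ℝ) ≤ 2)]
    rw [ENNReal.ofReal_pow (by norm_num : (0:ℝ) ≤ 5)]
    norm_num
    ring
  have h3pow : ((3:ℝ≥0∞)^n) = ENNReal.ofReal ((3:ℝ)^n) := by
    rw [ENNReal.ofReal_pow (by norm_num : (0:ℝ) ≤ 3)]; norm_num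
  have h5pow : ((5:ℝ≥0∞)^n) = ENNReal.ofReal ((5:ℝ)^n) := by
    rw [ENNReal.ofReal_pow (by norm_num : (0:ℝ) ≤ 5)]; norm_num
  have hrrr : ∀ {a b : ℝ}, 0 < a → a ≤ b → b ^ (-lam) ≤ a ^ (-lam) := by
    intro a b ha hab
    rw [Real.rpow_neg (le_of_lt ha), Real.rpow_neg (by linarith)]
    exact inv_anti₀ (Real.rpow_pos_of_pos ha lam)
      (Real.rpow_le_rpow (le_of_lt ha) hab (le_of_lt hlam0))
  refine ⟨K, hK, ?_⟩
  intro f hf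
  -- measurable representative
  have hfae : f =ᵐ[volume] (hf.aestronglyMeasurable).mk f := hf.aestronglyMeasurable.ae_eq_mk
  set fm := (hf.aestronglyMeasurable).mk f with hfmdef
  have hfmm : Measurable fm := hf.aestronglyMeasurable.stronglyMeasurable_mk.measurable
  set g : Rn n → ℝ≥0∞ := fun y => ENNReal.ofReal |fm y| with hgdef
  have hgm : Measurable g := ENNReal.measurable_ofReal.comp hfmm.abs
  have hgg : (fun y => ENNReal.ofReal |f y|) =ᵐ[volume] g :=
    hfae.mono fun y hy => by rw [hgdef]; simp only [hy]
  have hHLM : HLM f = maxE g := funext fun x => maxE_congr_ae hgg x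
  have hMor : zygMorrey lam f = zygMorreyE lam g := zygMorreyE_congr_ae lam hgg
  rw [hHLM, hMor]
  set N := zygMorreyE lam g with hNdef
  by_cases hNtop : N = ⊤
  · rw [hNtop, ENNReal.mul_top (by simp [ENNReal.ofReal_eq_zero, not_le, hK])]
    exact le_top
  by_cases hN0 : N = 0
  · -- degenerate zero case
    have hzAvg : ∀ (c : Rn n) (H : ℝ), 0 < H → zygAvgE g c H = 0 := by
      intro c H hH
      have h1 : ENNReal.ofReal (H ^ lam) * zygAvgE g c H ≤ N := by
        rw [hNdef]
        exact le_iSup_of_le c (le_iSup_of_le H (le_iSup_of_le hH le_rfl))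
      rw [hN0, le_zero_iff] at h1
      rcases mul_eq_zero.mp h1 with hc | hc
      · exact absurd hc (ENNReal.ofReal_pos.mpr (Real.rpow_pos_of_pos hH lam)).ne'
      · exact hc
    have hInt0 : ∀ (c : Rn n) (H : ℝ), 0 < H → ∫⁻ y in zCube c H, g y = 0 := by
      intro c H hH
      have h1 := avg_le_zygAvgE g c hH
      rw [hzAvg c H hH, le_zero_iff] at h1
      rcases mul_eq_zero.mp h1 with hc | hc
      · exact absurd hc (by simp [ENNReal.inv_eq_zero])
      · exact hc
    have hF0 : ∀ x, maxE g x = 0 := fun x =>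
      le_antisymm (maxE_le fun c u hu _ => by rw [hInt0 c u hu, mul_zero]) (zero_le)
    have hFF0 : ∀ x, maxE (maxE g) x = 0 := fun x => by
      refine le_antisymm (maxE_le fun c u hu _ => ?_) (zero_le)
      have : ∫⁻ y in zCube c u, maxE g y = 0 := by
        rw [show (fun y => maxE g y) = (fun _ : Rn n => (0:ℝ≥0∞)) from funext hF0]
        simp
      rw [this, mul_zero]
    have hwz : ∀ (c : Rn n) (h : ℝ), weakZygAvgE (maxE (maxE g)) c h = 0 := by
      intro c h
      refine le_antisymm ?_ (zero_le)
      refine ENNReal.le_of_forall_pos_le_add fun ε hε _ => ?_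
      rw [zero_add, ← ENNReal.ofReal_coe_nnreal]
      refine sInf_le ⟨ε, by exact_mod_cast hε, rfl, fun t ht => ?_⟩
      have hset : {x ∈ zCube c h | ENNReal.ofReal (ε*t) < maxE (maxE g) x} = ∅ := by
        ext x; simp [hFF0 x]
      rw [hset]
      simp
    rw [hN0, mul_zero]
    refine iSup_le fun c => iSup_le fun h => iSup_le fun _ => ?_
    rw [hwz c h, mul_zero]
  · -- main case
    set Nr := N.toReal with hNrdef
    have hNr : 0 < Nr := ENNReal.toReal_pos hN0 hNtop
    have hNof : N = ENNReal.ofReal Nr := (ENNReal.ofReal_toReal hNtop).symm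
    set F := maxE g with hFdef
    have hMb : ∀ (c : Rn n) (H : ℝ), 0 < H →
        zygAvgE g c H ≤ ENNReal.ofReal (H ^ (-lam)) * N := by
      intro c H hH
      have h1 : ENNReal.ofReal (H ^ lam) * zygAvgE g c H ≤ N :=
        le_iSup_of_le c (le_iSup_of_le H (le_iSup_of_le hH le_rfl))
      have hd0 : ENNReal.ofReal (H ^ lam) ≠ 0 :=
        (ENNReal.ofReal_pos.mpr (Real.rpow_pos_of_pos hH lam)).ne'
      have hinv : (ENNReal.ofReal (H ^ lam))⁻¹ = ENNReal.ofReal (H ^ (-lam)) := by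
        rw [Real.rpow_neg (le_of_lt hH), ENNReal.ofReal_inv_of_pos (Real.rpow_pos_of_pos hH lam)]
      have h2 : zygAvgE g c H ≤ (ENNReal.ofReal (H ^ lam))⁻¹ * N := by
        calc zygAvgE g c H
            = (ENNReal.ofReal (H ^ lam))⁻¹ * (ENNReal.ofReal (H ^ lam) * zygAvgE g c H) := by
              rw [← mul_assoc, ENNReal.inv_mul_cancel hd0 ENNReal.ofReal_ne_top, one_mul]
          _ ≤ (ENNReal.ofReal (H ^ lam))⁻¹ * N := mul_le_mul_right h1 _
      rwa [hinv] at h2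
    -- tail sup bound for any function controlled by Morrey data
    have htail : ∀ (c₀ : Rn n) (h : ℝ), 0 < h →
        (⨆ (H : ℝ) (_ : h ≤ H), (ENNReal.ofReal (H^n))⁻¹ * ∫⁻ y in zCube c₀ H, g y)
          ≤ ENNReal.ofReal (h ^ (-lam)) * N := by
      intro c₀ h hh
      refine iSup_le fun H => iSup_le fun hH => ?_
      have hH0 : 0 < H := lt_of_lt_of_le hh hH
      refine le_trans (avg_le_zygAvgE g c₀ hH0) (le_trans (hMb c₀ H hH0) ?_)
      exact mul_le_mul_left (ENNReal.ofReal_le_ofReal (hrrr hh hH)) _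
    -- average of F over any cube centered anywhere
    have hTF : ∀ (c₀ : Rn n) (H : ℝ), 0 < H →
        (ENNReal.ofReal (H^n))⁻¹ * ∫⁻ y in zCube c₀ H, F y
          ≤ C3 * (ENNReal.ofReal (H ^ (-lam)) * N) := by
      intro c₀ H hH0
      set X := ENNReal.ofReal (H ^ (-lam)) * N with hXdef
      have hpt : ∀ y ∈ zCube c₀ H, F y
          ≤ maxE ((zCube c₀ (3*H)).indicator g) y + (3:ℝ≥0∞)^n * X := by
        intro y hy
        refine le_trans (P1 g c₀ hH0 hy) (add_le_add_right ?_ _)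
        exact mul_le_mul_right (htail c₀ H hH0) _
      have hd0 : (ENNReal.ofReal (H^n)) ≠ 0 := ofReal_pow_ne_zero hH0
      have hIbig : ∫⁻ y in zCube c₀ H, maxE ((zCube c₀ (3*H)).indicator g) y
          ≤ C2 * ((3:ℝ≥0∞)^n * ENNReal.ofReal (H^n)) * X := by
        have hsub : zCube c₀ H ⊆ zCube c₀ (3*H) := fun y hy i =>
          le_trans (hy i) (by nlinarith [hH0])
        calc ∫⁻ y in zCube c₀ H, maxE ((zCube c₀ (3*H)).indicator g) y
            ≤ ∫⁻ y in zCube c₀ (3*H), maxE ((zCube c₀ (3*H)).indicator g) y :=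
              lintegral_mono_set hsub
          _ ≤ C2 * ENNReal.ofReal ((3*H) ^ n) * zygAvgE g c₀ (3*H) :=
              stein g hgm c₀ (by linarith)
          _ ≤ C2 * ENNReal.ofReal ((3*H) ^ n) * (ENNReal.ofReal ((3*H) ^ (-lam)) * N) :=
              mul_le_mul_right (hMb c₀ (3*H) (by linarith)) _
          _ ≤ C2 * ((3:ℝ≥0∞)^n * ENNReal.ofReal (H^n)) * X := by
              rw [hXdef]
              refine mul_le_mul ?_ ?_ (zero_le) (zero_le)
              · refine mul_le_mul_right (le_of_eq ?_) _
                rw [show ((3*H):ℝ)^n = 3^n * H^n by ring,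
                  ENNReal.ofReal_mul (by positivity : (0:ℝ) ≤ 3^n), h3pow]
              · exact mul_le_mul_left
                  (ENNReal.ofReal_le_ofReal (hrrr hH0 (by linarith))) _
      calc (ENNReal.ofReal (H^n))⁻¹ * ∫⁻ y in zCube c₀ H, F y
          ≤ (ENNReal.ofReal (H^n))⁻¹ * ∫⁻ y in zCube c₀ H,
              (maxE ((zCube c₀ (3*H)).indicator g) y + (3:ℝ≥0∞)^n * X) :=
            mul_le_mul_right (setLIntegral_mono' (measurableSet_zCube _ _) hpt) _
        _ = (ENNReal.ofReal (H^n))⁻¹ * ((∫⁻ y in zCube c₀ H,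
              maxE ((zCube c₀ (3*H)).indicator g) y)
              + ((3:ℝ≥0∞)^n * X) * ENNReal.ofReal (H^n)) := by
            rw [lintegral_add_right' _ aemeasurable_const, setLIntegral_const,
              volume_zCube c₀ (le_of_lt hH0)]
        _ ≤ (ENNReal.ofReal (H^n))⁻¹ * ((C2 * ((3:ℝ≥0∞)^n * ENNReal.ofReal (H^n)) * X)
              + ((3:ℝ≥0∞)^n * X) * ENNReal.ofReal (H^n)) := by
            exact mul_le_mul_right (add_le_add_left hIbig _) _
        _ = C3 * X := by
            rw [hC3def]
            have harr : (C2 * ((3:ℝ≥0∞)^n * ENNReal.ofReal (H^n)) * X)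
                + ((3:ℝ≥0∞)^n * X) * ENNReal.ofReal (H^n)
                = ENNReal.ofReal (H^n) * ((C2 * 3^n + 3^n) * X) := by ring
            rw [harr, ← mul_assoc, ENNReal.inv_mul_cancel hd0 ENNReal.ofReal_ne_top, one_mul]
    -- per-cube weak bound
    refine iSup_le fun c₀ => iSup_le fun h => iSup_le fun hh => ?_
    have hhl : 0 < h ^ (-lam) := Real.rpow_pos_of_pos hh _
    set α : ℝ := K * Nr * h ^ (-lam) with hαdef
    have hα : 0 < α := by positivity
    have hsupF : (⨆ (H : ℝ) (_ : h ≤ H),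
        (ENNReal.ofReal (H^n))⁻¹ * ∫⁻ y in zCube c₀ H, F y)
          ≤ C3 * (ENNReal.ofReal (h ^ (-lam)) * N) := by
      refine iSup_le fun H => iSup_le fun hH => ?_
      have hH0 : 0 < H := lt_of_lt_of_le hh hH
      refine le_trans (hTF c₀ H hH0) (mul_le_mul_right ?_ _)
      exact mul_le_mul_left (ENNReal.ofReal_le_ofReal (hrrr hh hH)) _
    have hwk : weakZygAvgE (maxE F) c₀ h ≤ ENNReal.ofReal α := by
      refine sInf_le ⟨α, hα, rfl, ?_⟩
      intro t ht
      have hd0 : (ENNReal.ofReal (h^n)) ≠ 0 := ofReal_pow_ne_zero hh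
      rcases le_or_gt t 1 with ht1 | ht1
      · -- easy branch t ≤ 1
        have hLHS : (ENNReal.ofReal (h^n))⁻¹
            * volume {x ∈ zCube c₀ h | ENNReal.ofReal (α*t) < maxE F x} ≤ 1 := by
          calc (ENNReal.ofReal (h^n))⁻¹
              * volume {x ∈ zCube c₀ h | ENNReal.ofReal (α*t) < maxE F x}
              ≤ (ENNReal.ofReal (h^n))⁻¹ * volume (zCube c₀ h) :=
                mul_le_mul_right (measure_mono (Set.sep_subset _ _)) _
            _ = 1 := by
                rw [volume_zCube c₀ (le_of_lt hh),
                  ENNReal.inv_mul_cancel hd0 ENNReal.ofReal_ne_top]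
        refine le_trans hLHS ?_
        have h1t : 1 ≤ 1/t := by rw [le_div_iff₀ ht]; linarith
        have hlp : 0 ≤ logPlus (1/t) := le_max_right _ _
        calc (1:ℝ≥0∞) = ENNReal.ofReal 1 := by norm_num
          _ ≤ ENNReal.ofReal ((1/t) * (1 + logPlus (1/t))) := by
              refine ENNReal.ofReal_le_ofReal ?_
              nlinarith
      · -- main branch t > 1
        have hlogz : logPlus (1/t) = 0 :=
          max_eq_right (Real.log_nonpos (by positivity) (by rw [div_le_one ht]; linarith))
        set s := α * t with hsdef
        have hs : 0 < s := by positivity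
        have hs2 : 0 < s/2 := by positivity
        have hd20 : ENNReal.ofReal (s/2) ≠ 0 := (ENNReal.ofReal_pos.mpr hs2).ne'
        -- the tail is at most s/2
        have hB : (3:ℝ≥0∞)^n * (⨆ (H : ℝ) (_ : h ≤ H),
            (ENNReal.ofReal (H^n))⁻¹ * ∫⁻ y in zCube c₀ H, F y) ≤ ENNReal.ofReal (s/2) := by
          refine le_trans (mul_le_mul_right hsupF _) ?_
          rw [hC3eq, hNof, h3pow]
          rw [← ENNReal.ofReal_mul (by positivity : (0:ℝ) ≤ h ^ (-lam)),
            ← ENNReal.ofReal_mul (by positivity : (0:ℝ) ≤ C3r),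
            ← ENNReal.ofReal_mul (by positivity : (0:ℝ) ≤ (3:ℝ)^n)]
          refine ENNReal.ofReal_le_ofReal ?_
          rw [hsdef, hαdef]
          have h315 : (3:ℝ)^n ≤ 15^n := pow_le_pow_left₀ (by norm_num) (by norm_num) n
          have hKval : K = 2 * 15^n * C3r := hKdef
          nlinarith [mul_pos hNr hhl, mul_pos hC3r (mul_pos hNr hhl),
            mul_le_mul_of_nonneg_right h315
              (le_of_lt (mul_pos hC3r (mul_pos hhl hNr)))]
        -- containment
        have hsub2 : {x ∈ zCube c₀ h | ENNReal.ofReal s < maxE F x}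
            ⊆ {x | ENNReal.ofReal (s/2) < maxE ((zCube c₀ (3*h)).indicator F) x} := by
          rintro x ⟨hxQ, hxs⟩
          simp only [Set.mem_setOf_eq]
          by_contra hnot
          push_neg at hnot
          have h1 : maxE F x ≤ ENNReal.ofReal (s/2) + ENNReal.ofReal (s/2) :=
            le_trans (P1 F c₀ hh hxQ) (add_le_add hnot hB)
          rw [← ENNReal.ofReal_add (le_of_lt hs2) (le_of_lt hs2)] at h1
          have : s/2 + s/2 = s := by ring
          rw [this] at h1
          exact absurd hxs (not_lt.mpr h1)
        -- integral of F over the 3h-cube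
        have hIQ1 : ∫⁻ y, (zCube c₀ (3*h)).indicator F y
            ≤ ENNReal.ofReal ((3*h)^n) * (C3 * (ENNReal.ofReal ((3*h) ^ (-lam)) * N)) := by
          rw [lintegral_indicator (measurableSet_zCube _ _)]
          have h2 := hTF c₀ (3*h) (by linarith)
          calc ∫⁻ y in zCube c₀ (3*h), F y
              = ENNReal.ofReal ((3*h)^n) * ((ENNReal.ofReal ((3*h)^n))⁻¹
                  * ∫⁻ y in zCube c₀ (3*h), F y) := by
                rw [← mul_assoc, ENNReal.mul_inv_cancel
                  (ofReal_pow_ne_zero (by linarith)) ENNReal.ofReal_ne_top, one_mul]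
            _ ≤ ENNReal.ofReal ((3*h)^n) * (C3 * (ENNReal.ofReal ((3*h) ^ (-lam)) * N)) :=
                mul_le_mul_right h2 _
        -- volume bound
        have hvol : volume {x ∈ zCube c₀ h | ENNReal.ofReal s < maxE F x}
            ≤ ENNReal.ofReal (h^n * (1/t)) := by
          have hw := weak11 ((zCube c₀ (3*h)).indicator F) (ENNReal.ofReal (s/2))
          calc volume {x ∈ zCube c₀ h | ENNReal.ofReal s < maxE F x}
              ≤ volume {x | ENNReal.ofReal (s/2)
                  < maxE ((zCube c₀ (3*h)).indicator F) x} := measure_mono hsub2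
            _ = (ENNReal.ofReal (s/2))⁻¹ * (ENNReal.ofReal (s/2) * volume {x |
                  ENNReal.ofReal (s/2) < maxE ((zCube c₀ (3*h)).indicator F) x}) := by
                rw [← mul_assoc, ENNReal.inv_mul_cancel hd20 ENNReal.ofReal_ne_top, one_mul]
            _ ≤ (ENNReal.ofReal (s/2))⁻¹ * ((5:ℝ≥0∞)^n
                  * ∫⁻ y, (zCube c₀ (3*h)).indicator F y) := mul_le_mul_right hw _
            _ ≤ (ENNReal.ofReal (s/2))⁻¹ * ((5:ℝ≥0∞)^n * (ENNReal.ofReal ((3*h)^n)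
                  * (C3 * (ENNReal.ofReal ((3*h) ^ (-lam)) * N)))) :=
                mul_le_mul_right (mul_le_mul_right hIQ1 _) _
            _ = ENNReal.ofReal ((2/s) * ((5:ℝ)^n * ((3*h)^n
                  * (C3r * ((3*h) ^ (-lam) * Nr))))) := by
                rw [hC3eq, hNof, h5pow]
                rw [show (ENNReal.ofReal (s/2))⁻¹ = ENNReal.ofReal (2/s) by
                  rw [show (2:ℝ)/s = (s/2)⁻¹ by field_simp,
                    ENNReal.ofReal_inv_of_pos hs2]]
                rw [← ENNReal.ofReal_mul (by positivity : (0:ℝ) ≤ (3*h) ^ (-lam)),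
                  ← ENNReal.ofReal_mul (by positivity : (0:ℝ) ≤ C3r),
                  ← ENNReal.ofReal_mul (by positivity : (0:ℝ) ≤ (3*h)^n),
                  ← ENNReal.ofReal_mul (by positivity : (0:ℝ) ≤ (5:ℝ)^n),
                  ← ENNReal.ofReal_mul (by positivity : (0:ℝ) ≤ 2/s)]
            _ ≤ ENNReal.ofReal (h^n * (1/t)) := by
                refine ENNReal.ofReal_le_ofReal ?_
                have hles : (3*h) ^ (-lam) ≤ h ^ (-lam) := hrrr hh (by linarith)
                have h3hn : ((3*h):ℝ)^n = 3^n * h^n := by ring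
                rw [h3hn, hsdef, hαdef]
                have hKval : K = 2 * 15^n * C3r := hKdef
                have h15 : (15:ℝ)^n = 3^n * 5^n := by
                  rw [show (15:ℝ) = 3 * 5 by norm_num, mul_pow]
                rw [div_mul_eq_mul_div, div_le_iff₀ (by positivity)]
                have hhn : (0:ℝ) < h^n := pow_pos hh n
                have hrhs : h ^ n * (1 / t) * (K * Nr * h ^ (-lam) * t)
                    = h ^ n * (2 * (3^n * 5^n) * C3r) * Nr * h ^ (-lam) := by
                  rw [hKval, h15]; field_simp
                rw [hrhs]
                have hkey := mul_le_mul_of_nonneg_left hles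
                  (by positivity : (0:ℝ) ≤ 2 * 5^n * 3^n * h^n * C3r * Nr)
                nlinarith [hkey]
        -- conclude weak-type condition
        rw [hlogz]
        have hRHS : ENNReal.ofReal ((1/t) * (1 + 0)) = ENNReal.ofReal (1/t) := by norm_num
        rw [hRHS]
        calc (ENNReal.ofReal (h^n))⁻¹
            * volume {x ∈ zCube c₀ h | ENNReal.ofReal (α*t) < maxE F x}
            ≤ (ENNReal.ofReal (h^n))⁻¹ * ENNReal.ofReal (h^n * (1/t)) := by
              exact mul_le_mul_right hvol _
          _ = ENNReal.ofReal (1/t) := by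
              rw [ENNReal.ofReal_mul (by positivity : (0:ℝ) ≤ h^n), ← mul_assoc,
                ENNReal.inv_mul_cancel hd0 ENNReal.ofReal_ne_top, one_mul]
    -- finish
    calc ENNReal.ofReal (h ^ lam) * weakZygAvgE (maxE F) c₀ h
        ≤ ENNReal.ofReal (h ^ lam) * ENNReal.ofReal α := mul_le_mul_right hwk _
      _ = ENNReal.ofReal (h ^ lam * (K * Nr * h ^ (-lam))) :=
          (ENNReal.ofReal_mul (by positivity : (0:ℝ) ≤ h ^ lam)).symm
      _ = ENNReal.ofReal (K * Nr) := by
          congr 1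
          rw [show h ^ lam * (K * Nr * h ^ (-lam)) = (K * Nr) * (h ^ lam * h ^ (-lam)) by ring,
            ← Real.rpow_add hh, add_neg_cancel, Real.rpow_zero, mul_one]
      _ = ENNReal.ofReal K * N := by
          rw [ENNReal.ofReal_mul (le_of_lt hK), hNof]


end
end
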